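/- arXiv:0909.1134 — 4 statements merged into one kernel-verified Lean document; each statement's English description precedes it below -/
import Mathlib

section
/- The map Φ from facets of Λ_d to S_d(X,(∞,a)) is a bijection, with inverse Ψ. -/
open Finset

/-- The one-block map `φ` (0-based encoding of an ordered set in listing order; output is the
multiset of 1-based variable indices). -/
def phiMap (τ : Finset ℕ) : Multiset ℕ :=
  ↑(((τ.sort (· ≤ ·)).zipIdx.map Prod.swap |>.map (fun p => p.2 - p.1)).filter (fun x => x ≠ 0))

/-- The "non-initial-segment" part `ρ(Y,W)` of the inverse map `ψ(Y,W)`, for an ambient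
ordered set `W` whose `a`-subsets are matched with monomials. -/
def rhoMap (a : ℕ) (μ : Multiset ℕ) : Finset ℕ :=
  ((μ.sort (· ≤ ·)).zipIdx.map Prod.swap |>.map (fun p => p.2 + p.1 + (a - Multiset.card μ))).toFinset

/-- The one-block map `ψ(Y,W) = σ ∪ ρ`. -/
def psiMap (a : ℕ) (μ : Multiset ℕ) : Finset ℕ :=
  Finset.range (a - Multiset.card μ) ∪ rhoMap a μ

/-- `fl(τ,i)`: the revlex-first `k`-subset of `range N` containing `s` (add the earliest
missing elements). -/
def fillF (s : Finset ℕ) (k N : ℕ) : Finset ℕ :=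
  s ∪ ((((Finset.range N) \ s).sort (· ≤ ·)).take (k - s.card)).toFinset

/-- A facet of `Λ_d`, encoded blockwise: `τ i ⊆ V_i = range (n i)` with `|τ i| ≤ a i`
(for `i < m`) and `∑ |τ i| = d`. -/
def IsFacetT (m d : ℕ) (n a : ℕ → ℕ) (τ : ℕ → Finset ℕ) : Prop :=
  (∀ i, i < m → τ i ⊆ Finset.range (n i)) ∧ (∀ i, i < m → (τ i).card ≤ a i) ∧
  (∀ i, m ≤ i → τ i = ∅) ∧ (∑ i ∈ Finset.range m, (τ i).card) = d

/-- `Φ_i(τ) = φ(V_i, X_i)(fl(τ,i))`. -/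
def PhiBlock (a n : ℕ → ℕ) (τ : ℕ → Finset ℕ) (i : ℕ) : Multiset ℕ :=
  phiMap (fillF (τ i) (a i) (n i))

/-- `b i = a i - deg Φ_i(τ)`, the size of the block-`i` part of `V[τ]`. -/
def bfun (a n : ℕ → ℕ) (τ : ℕ → Finset ℕ) (i : ℕ) : ℕ :=
  a i - Multiset.card (PhiBlock a n τ i)

/-- Offsets identifying `V[τ] = ⋃ᵢ (first `b i` elements of `V_i`)` with `range (∑ b)`. -/
def offF (b : ℕ → ℕ) (i : ℕ) : ℕ := ∑ t ∈ Finset.range i, b t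

/-- `τ ∩ V[τ]`, as a subset of `range (∑ b)` via the order isomorphism. -/
def globF (m : ℕ) (b : ℕ → ℕ) (τ : ℕ → Finset ℕ) : Finset ℕ :=
  (Finset.range m).biUnion (fun i => ((τ i) ∩ Finset.range (b i)).image (fun j => offF b i + j))

/-- The full map `Φ`: index `0` gives the `X₀`-part `Φ₀(τ) = φ(V[τ],X₀)(τ ∩ V[τ])`, and index
`i+1 ≤ m` gives the `X_i`-part `Φ_i(τ)`. -/
def PhiMapT (m : ℕ) (a n : ℕ → ℕ) (τ : ℕ → Finset ℕ) : ℕ → Multiset ℕ :=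
  fun i => if i = 0 then phiMap (globF m (bfun a n τ) τ)
    else if i ≤ m then PhiBlock a n τ (i - 1) else 0

/-- Membership in `S_d(X,(∞,a))`, blockwise: `μ 0` is the `X₀`-part (`|X₀| = ∑ a - d`) and
`μ (i+1)` is the `X_i`-part (`|X_i| = n i - a i`, of degree at most `a i`). -/
def InST (m d : ℕ) (n a : ℕ → ℕ) (μ : ℕ → Multiset ℕ) : Prop :=
  (∑ i ∈ Finset.range (m + 1), Multiset.card (μ i)) ≤ d ∧
  (∀ i, i < m → Multiset.card (μ (i + 1)) ≤ a i) ∧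
  (∀ x ∈ μ 0, 1 ≤ x ∧ x ≤ (∑ i ∈ Finset.range m, a i) - d) ∧
  (∀ i, i < m → ∀ x ∈ μ (i + 1), 1 ≤ x ∧ x ≤ n i - a i) ∧
  (∀ i, m + 1 ≤ i → μ i = 0)

/-- The inverse map `Ψ`: `Ψ(μ) ∩ V_i = Ψ_i(μ) ∪ (block-i part of Ψ₀(μ))` where
`Ψ_i(μ) = ρ(X_i,V_i)(μ_{X_i})` and `Ψ₀(μ) = ψ(X₀,V[μ])(μ_{X₀}) ⊆ V[μ] ≅ range (∑ b)`. -/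
def PsiMapT (m d : ℕ) (n a : ℕ → ℕ) (μ : ℕ → Multiset ℕ) : ℕ → Finset ℕ :=
  fun i =>
    if i < m then
      rhoMap (a i) (μ (i + 1)) ∪
        ((psiMap ((∑ t ∈ Finset.range m, (a t - Multiset.card (μ (t + 1)))) -
              ((∑ t ∈ Finset.range m, a t) - d)) (μ 0) ∩
            Finset.Ico (offF (fun t => a t - Multiset.card (μ (t + 1))) i)
              (offF (fun t => a t - Multiset.card (μ (t + 1))) i +
                (a i - Multiset.card (μ (i + 1))))).image
          (fun j => j - offF (fun t => a t - Multiset.card (μ (t + 1))) i))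
    else ∅

/-- enumeration with index first (replacement for the removed `List.enum`) -/
def List.enum {α : Type*} (l : List α) : List (ℕ × α) := l.zipIdx.map Prod.swap

lemma List.zipIdx_swap_eq_enum {α : Type*} (l : List α) : l.zipIdx.map Prod.swap = l.enum := rfl

@[simp] lemma List.enum_length {α : Type*} (l : List α) : l.enum.length = l.length := by
  simp [List.enum]

@[simp] lemma List.length_enum {α : Type*} (l : List α) : l.enum.length = l.length := by
  simp [List.enum]

@[simp] lemma List.getElem_enum {α : Type*} (l : List α) (i : ℕ) (h : i < l.enum.length) :
    l.enum[i] = (i, l[i]'(by simpa using h)) := by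
  simp [List.enum]

set_option linter.unusedSectionVars false in
lemma list_toFinset_range' (n : ℕ) : (List.range n).toFinset = Finset.range n := by
  ext x; simp

lemma sorted_lt_gap {L : List ℕ} (h : L.Pairwise (· < ·)) :
    ∀ i k, (hk : i + k < L.length) → L[i]'(by omega) + k ≤ L[i + k] := by
  intro i k
  induction k with
  | zero => simp
  | succ k ih =>
    intro hk
    have h1 : L[i] + k ≤ L[i + k]'(by omega) := ih (by omega)
    have h2 : L[i + k]'(by omega) < L[i + (k + 1)]'(by omega) :=
      List.pairwise_iff_getElem.mp h _ _ (by omega) (by omega) (by omega)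
    omega

lemma sorted_lt_le_getElem {L : List ℕ} (h : L.Pairwise (· < ·)) (j : ℕ) (hj : j < L.length) :
    j ≤ L[j] := by
  have := sorted_lt_gap h 0 j (by omega)
  simp only [Nat.zero_add] at this
  omega

lemma sorted_le_getElem_mono {L : List ℕ} (h : L.Pairwise (· ≤ ·)) {i j : ℕ} (hij : i ≤ j)
    (hj : j < L.length) : L[i]'(by omega) ≤ L[j] := by
  rcases eq_or_lt_of_le hij with rfl | hlt
  · exact le_refl _
  · exact List.pairwise_iff_getElem.mp h _ _ (by omega) (by omega) hlt

/-- The canonical strictly sorted list with initial segment `range t` and offset part from `u`. -/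
def buildL (t : ℕ) (u : List ℕ) : List ℕ :=
  List.range t ++ u.enum.map (fun p => p.2 + p.1 + t)

lemma buildL_def (t : ℕ) (u : List ℕ) :
    buildL t u = List.range t ++ u.enum.map (fun p => p.2 + p.1 + t) := rfl

lemma buildL_length (t : ℕ) (u : List ℕ) : (buildL t u).length = t + u.length := by
  simp [buildL]

lemma buildL_getElem_lt (t : ℕ) (u : List ℕ) {j : ℕ} (hj : j < t) :
    (buildL t u)[j]'(by rw [buildL_length]; omega) = j := by
  simp only [buildL]
  rw [List.getElem_append_left (by simpa using hj)]
  simp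

lemma buildL_getElem_ge (t : ℕ) (u : List ℕ) {j : ℕ} (hj1 : t ≤ j) (hj2 : j < t + u.length) :
    (buildL t u)[j]'(by rw [buildL_length]; omega) = u[j - t]'(by omega) + (j - t) + t := by
  simp only [buildL]
  rw [List.getElem_append_right (by simpa using hj1)]
  simp [List.getElem_enum]

lemma buildL_sorted (t : ℕ) {u : List ℕ} (hu : u.Pairwise (· ≤ ·)) (hu1 : ∀ x ∈ u, 1 ≤ x) :
    (buildL t u).Pairwise (· < ·) := by
  rw [List.pairwise_iff_getElem]
  intro i j hi hj hij
  rw [buildL_length] at hj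
  rcases lt_or_ge j t with hjt | hjt
  · rw [buildL_getElem_lt t u (by omega), buildL_getElem_lt t u hjt]; omega
  · rw [buildL_getElem_ge t u hjt (by omega)]
    have h1 : 1 ≤ u[j - t]'(by omega) := hu1 _ (by apply List.getElem_mem)
    rcases lt_or_ge i t with hit | hit
    · rw [buildL_getElem_lt t u hit]; omega
    · rw [buildL_getElem_ge t u hit (by omega)]
      have := sorted_le_getElem_mono hu (show i - t ≤ j - t by omega)
        (show j - t < u.length by omega)
      omega

lemma buildL_g (t : ℕ) (u : List ℕ) :
    ((buildL t u).enum.map (fun p => p.2 - p.1)) = List.replicate t 0 ++ u := by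
  apply List.ext_getElem
  · simp [buildL_length]
  · intro j h1 h2
    have hj : j < t + u.length := by simpa [buildL_length] using h1
    rw [List.getElem_map, List.getElem_enum]
    rcases lt_or_ge j t with hjt | hjt
    · rw [buildL_getElem_lt t u hjt, List.getElem_append_left (by simpa using hjt)]
      simp
    · rw [buildL_getElem_ge t u hjt hj, List.getElem_append_right (by simpa using hjt)]
      simp; omega

lemma buildL_phi_list (t : ℕ) {u : List ℕ} (hu1 : ∀ x ∈ u, 1 ≤ x) :
    (((buildL t u).enum.map (fun p => p.2 - p.1)).filter (fun x => x ≠ 0)) = u := by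
  rw [buildL_g, List.filter_append]
  have h1 : (List.replicate t (0:ℕ)).filter (fun x => x ≠ 0) = [] := by simp
  have h2 : u.filter (fun x => x ≠ 0) = u := by
    rw [List.filter_eq_self]
    intro a ha
    have := hu1 a ha
    simp; omega
  rw [h1, h2]; simp

lemma filter_ne_zero_sorted_eq : ∀ (g : List ℕ), g.Pairwise (· ≤ ·) →
    ∃ t, g = List.replicate t 0 ++ g.filter (fun x => x ≠ 0) := by
  intro g
  induction g with
  | nil => exact fun _ => ⟨0, rfl⟩
  | cons a g ih =>
    intro hg
    have hg' : g.Pairwise (· ≤ ·) := hg.of_cons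
    rcases Nat.eq_zero_or_pos a with rfl | ha
    · obtain ⟨t, ht⟩ := ih hg'
      refine ⟨t + 1, ?_⟩
      rw [List.filter_cons_of_neg (by simp)]
      rw [List.replicate_succ, List.cons_append, ← ht]
    · refine ⟨0, ?_⟩
      rw [List.replicate_zero, List.nil_append,
        List.filter_cons_of_pos (by simp; omega), List.filter_eq_self.mpr ?_]
      intro b hb
      have : a ≤ b := (List.pairwise_cons.mp hg).1 b hb
      simp; omega

lemma decode (s : Finset ℕ) : ∃ t u, u.Pairwise (· ≤ ·) ∧ (∀ x ∈ u, 1 ≤ x) ∧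
    s.sort (· ≤ ·) = buildL t u := by
  set L := s.sort (· ≤ ·) with hLdef
  have hsl : L.Pairwise (· < ·) := List.sortedLT_iff_pairwise.mp (Finset.sortedLT_sort s)
  set g := L.enum.map (fun p => p.2 - p.1) with hgdef
  have hglen : g.length = L.length := by simp [hgdef]
  have hgget : ∀ j (h : j < L.length), g[j]'(by omega) = L[j] - j := by
    intro j h
    simp [hgdef, List.getElem_enum]
  have hgs : g.Pairwise (· ≤ ·) := by
    rw [List.pairwise_iff_getElem]
    intro i j hi hj hij
    rw [hglen] at hi hj
    rw [hgget i (by omega), hgget j (by omega)]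
    have := sorted_lt_gap hsl i (j - i) (by omega)
    simp only [show i + (j - i) = j by omega] at this
    omega
  obtain ⟨t, ht⟩ := filter_ne_zero_sorted_eq g hgs
  set u := g.filter (fun x => x ≠ 0) with hudef
  have hlen2 : g.length = t + u.length := by rw [ht]; simp
  refine ⟨t, u, hgs.filter _, ?_, ?_⟩
  · intro x hx
    have := List.of_mem_filter hx
    simp at this; omega
  · apply List.ext_getElem
    · rw [buildL_length]; omega
    · intro j h1 h2
      have hj : j < t + u.length := by rw [buildL_length] at h2; omega
      have hjL : j < L.length := h1
      have hLj := sorted_lt_le_getElem hsl j hjL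
      have hgj := hgget j hjL
      rcases lt_or_ge j t with hjt | hjt
      · rw [buildL_getElem_lt t u hjt]
        have : g[j]'(by omega) = 0 := by
          rw [List.getElem_of_eq ht, List.getElem_append_left (by simpa using hjt)]
          simp
        omega
      · rw [buildL_getElem_ge t u hjt hj]
        have : g[j]'(by omega) = u[j - t]'(by omega) := by
          rw [List.getElem_of_eq ht, List.getElem_append_right (by simpa using hjt)]
          simp
        omega

lemma msort_coe {u : List ℕ} (h : u.Pairwise (· ≤ ·)) : (↑u : Multiset ℕ).sort (· ≤ ·) = u :=
  List.Perm.eq_of_pairwise' (Multiset.pairwise_sort _ _) h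
    (Multiset.coe_eq_coe.mp (Multiset.sort_eq _ _))

/-- the "rho part" of the canonical set -/
def rpart (t : ℕ) (u : List ℕ) : Finset ℕ := (u.enum.map (fun p => p.2 + p.1 + t)).toFinset

lemma mem_rpart_iff {y t : ℕ} {u : List ℕ} :
    y ∈ rpart t u ↔ ∃ k, ∃ _ : k < u.length, y = u[k] + k + t := by
  rw [rpart, List.mem_toFinset, List.mem_iff_getElem]
  constructor
  · rintro ⟨k, hk, rfl⟩
    have hk' : k < u.length := by simpa using hk
    exact ⟨k, hk', by simp [List.getElem_enum]⟩
  · rintro ⟨k, hk, rfl⟩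
    exact ⟨k, by simpa using hk, by simp [List.getElem_enum]⟩

lemma mem_rpart_ge {t : ℕ} {u : List ℕ} (hu1 : ∀ x ∈ u, 1 ≤ x) :
    ∀ y ∈ rpart t u, t + 1 ≤ y := by
  intro y hy
  obtain ⟨k, hk, rfl⟩ := mem_rpart_iff.mp hy
  have := hu1 _ (List.getElem_mem hk)
  omega

lemma rlist_sorted (t : ℕ) {u : List ℕ} (hu : u.Pairwise (· ≤ ·)) (hu1 : ∀ x ∈ u, 1 ≤ x) :
    (u.enum.map (fun p => p.2 + p.1 + t)).Pairwise (· < ·) := by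
  have h := buildL_sorted t hu hu1
  rw [buildL_def] at h
  exact (List.pairwise_append.mp h).2.1

lemma rpart_card {t : ℕ} {u : List ℕ} (hu : u.Pairwise (· ≤ ·)) (hu1 : ∀ x ∈ u, 1 ≤ x) :
    (rpart t u).card = u.length := by
  rw [rpart, List.toFinset_card_of_nodup (rlist_sorted t hu hu1).nodup, List.length_map,
    List.enum_length]

lemma disj_rpart {t : ℕ} {u : List ℕ} (hu1 : ∀ x ∈ u, 1 ≤ x) :
    Disjoint (Finset.range t) (rpart t u) := by
  rw [Finset.disjoint_left]
  intro x hx hx'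
  have := mem_rpart_ge hu1 x hx'
  simp at hx
  omega

lemma encode_sort (t : ℕ) {u : List ℕ} (hu : u.Pairwise (· ≤ ·)) (hu1 : ∀ x ∈ u, 1 ≤ x) :
    ((buildL t u).toFinset).sort (· ≤ ·) = buildL t u :=
  (List.toFinset_sort _ (buildL_sorted t hu hu1).nodup).mpr
    ((buildL_sorted t hu hu1).imp le_of_lt)

lemma rho_eq_rpart (aa : ℕ) (μ : Multiset ℕ) :
    rhoMap aa μ = rpart (aa - Multiset.card μ) (μ.sort (· ≤ ·)) := rfl

section Bundle
set_option linter.unusedSectionVars false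
variable {s : Finset ℕ} {t : ℕ} {u : List ℕ}
  (hu : u.Pairwise (· ≤ ·)) (hu1 : ∀ x ∈ u, 1 ≤ x) (hs : s.sort (· ≤ ·) = buildL t u)
include hu hu1 hs

lemma M_phi : phiMap s = ↑u := by rw [phiMap, List.zipIdx_swap_eq_enum, hs, buildL_phi_list t hu1]

lemma M_s_eq : s = Finset.range t ∪ rpart t u := by
  rw [← Finset.sort_toFinset s (· ≤ ·), hs, buildL_def, List.toFinset_append,
    list_toFinset_range', rpart]

lemma M_rho : rhoMap (t + u.length) ↑u = rpart t u := by
  rw [rhoMap, List.zipIdx_swap_eq_enum, rpart, msort_coe hu]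
  simp

lemma M_psi : psiMap (t + u.length) ↑u = s := by
  rw [psiMap, M_rho hu hu1 hs]
  simp only [Multiset.coe_card]
  rw [show t + u.length - u.length = t by omega, ← M_s_eq hu hu1 hs]

lemma M_not_mem : t ∉ s := by
  rw [M_s_eq hu hu1 hs]
  intro h
  rcases Finset.mem_union.mp h with h | h
  · simp at h
  · have := mem_rpart_ge hu1 _ h; omega

lemma M_sdiff : s \ Finset.range t = rpart t u := by
  rw [M_s_eq hu hu1 hs, Finset.union_sdiff_cancel_left (disj_rpart hu1)]

lemma M_range_subset : Finset.range t ⊆ s := by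
  rw [M_s_eq hu hu1 hs]; exact Finset.subset_union_left

lemma M_card : s.card = t + u.length := by
  rw [M_s_eq hu hu1 hs, Finset.card_union_of_disjoint (disj_rpart hu1), Finset.card_range,
    rpart_card hu hu1]

lemma M_bound {N : ℕ} (hN : s ⊆ Finset.range N) : ∀ x ∈ u, x + (t + u.length) ≤ N := by
  intro x hx
  obtain ⟨k, hk, rfl⟩ := List.mem_iff_getElem.mp hx
  have h1 : u[u.length - 1]'(by omega) + (u.length - 1) + t ∈ s := by
    rw [M_s_eq hu hu1 hs]
    exact Finset.mem_union_right _ (mem_rpart_iff.mpr ⟨u.length - 1, by omega, rfl⟩)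
  have h2 := hN h1
  simp only [Finset.mem_range] at h2
  have h3 : u[k] ≤ u[u.length - 1]'(by omega) := sorted_le_getElem_mono hu (by omega) (by omega)
  omega

lemma M_subset_range {N : ℕ} (h1 : t + u.length ≤ N) (h2 : ∀ x ∈ u, x + (t + u.length) ≤ N) :
    s ⊆ Finset.range N := by
  rw [M_s_eq hu hu1 hs]
  intro x hx
  rcases Finset.mem_union.mp hx with hx | hx
  · simp at hx ⊢; omega
  · obtain ⟨k, hk, rfl⟩ := mem_rpart_iff.mp hx
    have := h2 _ (List.getElem_mem hk)
    simp; omega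

end Bundle

lemma sort_union_append {A B : Finset ℕ} (h : ∀ a ∈ A, ∀ b ∈ B, a < b) :
    (A ∪ B).sort (· ≤ ·) = A.sort (· ≤ ·) ++ B.sort (· ≤ ·) := by
  have hd : Disjoint A B := by
    rw [Finset.disjoint_left]
    intro x hx hx'
    exact absurd (h x hx x hx') (lt_irrefl x)
  apply List.Perm.eq_of_pairwise' (Finset.pairwise_sort _ _) ?_ ?_
  · rw [List.pairwise_append]
    refine ⟨Finset.pairwise_sort _ _, Finset.pairwise_sort _ _, ?_⟩
    intro a ha b hb
    exact le_of_lt (h a (by simpa using ha) b (by simpa using hb))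
  · rw [← Multiset.coe_eq_coe, Finset.sort_eq, ← Multiset.coe_add, Finset.sort_eq,
      Finset.sort_eq, ← Finset.disjUnion_eq_union A B hd]
    rfl

lemma fill_eq {Q R : Finset ℕ} {b N aa : ℕ} (hQ : Q ⊆ Finset.range b) (hR : ∀ x ∈ R, b ≤ x)
    (hRN : R ⊆ Finset.range N) (hbN : b ≤ N) (hb : b ≤ aa) (hcard : R.card = aa - b) :
    fillF (Q ∪ R) aa N = Finset.range b ∪ R := by
  have hdisjQR : Disjoint Q R := by
    rw [Finset.disjoint_left]
    intro x hx hx'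
    have := hQ hx; simp at this
    have := hR x hx'; omega
  have hcardU : (Q ∪ R).card = Q.card + R.card := Finset.card_union_of_disjoint hdisjQR
  have hQb : Q.card ≤ b := by
    calc Q.card ≤ (Finset.range b).card := Finset.card_le_card hQ
    _ = b := Finset.card_range b
  have hC : Finset.range N \ (Q ∪ R) =
      (Finset.range b \ Q) ∪ ((Finset.range N \ Finset.range b) \ R) := by
    ext x
    simp only [Finset.mem_sdiff, Finset.mem_union, Finset.mem_range]
    constructor
    · rintro ⟨hxN, hx⟩
      push_neg at hx
      rcases lt_or_ge x b with hxb | hxb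
      · exact Or.inl ⟨hxb, hx.1⟩
      · exact Or.inr ⟨⟨hxN, by omega⟩, hx.2⟩
    · rintro (⟨hxb, hxQ⟩ | ⟨⟨hxN, hxb⟩, hxR⟩)
      · exact ⟨by omega, fun hx => hx.elim hxQ (fun hx' => by have := hR x hx'; omega)⟩
      · exact ⟨hxN, fun hx => hx.elim (fun hx' => by have := hQ hx'; simp at this; omega) hxR⟩
  have hsep : ∀ a ∈ Finset.range b \ Q, ∀ c ∈ (Finset.range N \ Finset.range b) \ R, a < c := by
    intro a ha c hc
    simp at ha hc; omega
  have hk : aa - (Q ∪ R).card = b - Q.card := by omega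
  have hlen : ((Finset.range b \ Q).sort (· ≤ ·)).length = b - Q.card := by
    rw [Finset.length_sort, Finset.card_sdiff_of_subset hQ, Finset.card_range]
  rw [fillF, hk, hC, sort_union_append hsep, ← hlen, List.take_left, Finset.sort_toFinset]
  ext x
  simp only [Finset.mem_union, Finset.mem_sdiff, Finset.mem_range]
  constructor
  · rintro ((hx | hx) | ⟨hx, _⟩)
    · exact Or.inl (by have := hQ hx; simpa using this)
    · exact Or.inr hx
    · exact Or.inl hx
  · rintro (hx | hx)
    · by_cases hxQ : x ∈ Q
      · exact Or.inl (Or.inl hxQ)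
      · exact Or.inr ⟨hx, hxQ⟩
    · exact Or.inl (Or.inr hx)

lemma fillF_subset (s : Finset ℕ) (k N : ℕ) : s ⊆ fillF s k N := Finset.subset_union_left

lemma fillF_subset_range {s : Finset ℕ} {k N : ℕ} (hs : s ⊆ Finset.range N) :
    fillF s k N ⊆ Finset.range N := by
  rw [fillF]
  apply Finset.union_subset hs
  intro x hx
  rw [List.mem_toFinset] at hx
  have hx2 : x ∈ (Finset.range N \ s).sort (· ≤ ·) := List.mem_of_mem_take hx
  rw [Finset.mem_sort] at hx2
  exact (Finset.mem_sdiff.mp hx2).1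

lemma fillF_card {s : Finset ℕ} {k N : ℕ} (hs : s ⊆ Finset.range N) (h1 : s.card ≤ k)
    (h2 : k ≤ N) : (fillF s k N).card = k := by
  have hClen : ((Finset.range N \ s).sort (· ≤ ·)).length = N - s.card := by
    rw [Finset.length_sort, Finset.card_sdiff_of_subset hs, Finset.card_range]
  have hnodup : (((Finset.range N \ s).sort (· ≤ ·)).take (k - s.card)).Nodup :=
    (List.take_sublist _ _).nodup (Finset.sort_nodup _ _)
  have hdisj : Disjoint s ((((Finset.range N) \ s).sort (· ≤ ·)).take (k - s.card)).toFinset := by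
    rw [Finset.disjoint_left]
    intro x hx hx'
    rw [List.mem_toFinset] at hx'
    have := List.mem_of_mem_take hx'
    rw [Finset.mem_sort] at this
    exact (Finset.mem_sdiff.mp this).2 hx
  rw [fillF, Finset.card_union_of_disjoint hdisj, List.toFinset_card_of_nodup hnodup,
    List.length_take, hClen]
  have : s.card ≤ N := by
    calc s.card ≤ (Finset.range N).card := Finset.card_le_card hs
    _ = N := Finset.card_range N
  omega

lemma fillF_added_lt {s : Finset ℕ} {k N : ℕ} (hs : s ⊆ Finset.range N) {x y : ℕ}
    (hx : x ∈ fillF s k N) (hxs : x ∉ s) (hy : y < x) : y ∈ fillF s k N := by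
  by_cases hys : y ∈ s
  · exact fillF_subset s k N hys
  rw [fillF, Finset.mem_union, List.mem_toFinset] at hx
  rcases hx with hx | hx
  · exact absurd hx hxs
  rw [fillF, Finset.mem_union, List.mem_toFinset]
  refine Or.inr ?_
  set L := (Finset.range N \ s).sort (· ≤ ·) with hL
  obtain ⟨p, hp, hpx⟩ := List.mem_iff_getElem.mp hx
  rw [List.length_take] at hp
  have hpL : p < L.length := lt_of_lt_of_le hp (by omega)
  have hgetp : L[p] = x := by
    rw [← hpx, List.getElem_take]
  have hxN : x < N := by
    have hx2 : x ∈ L := List.mem_of_mem_take hx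
    rw [hL, Finset.mem_sort] at hx2
    simpa using (Finset.mem_sdiff.mp hx2).1
  have hyL : y ∈ L := by
    rw [hL, Finset.mem_sort, Finset.mem_sdiff]
    exact ⟨by simp; omega, hys⟩
  obtain ⟨q, hq, hqy⟩ := List.mem_iff_getElem.mp hyL
  have hqp : q < p := by
    by_contra hqp
    push_neg at hqp
    have h5 : L[p] ≤ L[q] := sorted_le_getElem_mono (Finset.pairwise_sort _ (· ≤ ·)) hqp hq
    omega
  rw [List.mem_iff_getElem]
  exact ⟨q, by rw [List.length_take]; omega, by rw [List.getElem_take]; exact hqy⟩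

lemma forward_block {s : Finset ℕ} {aa N : ℕ} (hsN : s ⊆ Finset.range N) (hc : s.card ≤ aa)
    (haN : aa ≤ N) :
    Multiset.card (phiMap (fillF s aa N)) ≤ aa ∧
    (∀ x ∈ phiMap (fillF s aa N), 1 ≤ x ∧ x ≤ N - aa) ∧
    rhoMap aa (phiMap (fillF s aa N)) =
      s \ Finset.range (aa - Multiset.card (phiMap (fillF s aa N))) ∧
    (s \ Finset.range (aa - Multiset.card (phiMap (fillF s aa N)))).card =
      Multiset.card (phiMap (fillF s aa N)) ∧
    psiMap aa (phiMap (fillF s aa N)) = fillF s aa N := by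
  set F := fillF s aa N with hF
  have hF1 : s ⊆ F := fillF_subset s aa N
  have hF2 : F ⊆ Finset.range N := fillF_subset_range hsN
  have hF3 : F.card = aa := fillF_card hsN hc haN
  obtain ⟨t, u, hu, hu1, hsort⟩ := decode F
  have hphi : phiMap F = ↑u := M_phi hu hu1 hsort
  have hcard : aa = t + u.length := by rw [← hF3]; exact M_card hu hu1 hsort
  have hdeg : Multiset.card (phiMap F) = u.length := by rw [hphi]; simp
  have htb : aa - Multiset.card (phiMap F) = t := by omega
  have htnm : t ∉ F := M_not_mem hu hu1 hsort
  -- added elements are < t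
  have hadd : ∀ x ∈ F, x ∉ s → x < t := by
    intro x hx hxs
    by_contra hxt
    push_neg at hxt
    rcases eq_or_lt_of_le hxt with rfl | hlt
    · exact htnm hx
    · exact htnm (fillF_added_lt hsN hx hxs hlt)
  have hFs : F \ Finset.range t = s \ Finset.range t := by
    ext x
    simp only [Finset.mem_sdiff, Finset.mem_range]
    constructor
    · rintro ⟨hx, hxt⟩
      refine ⟨?_, hxt⟩
      by_contra hxs
      exact hxt (hadd x hx hxs)
    · rintro ⟨hx, hxt⟩
      exact ⟨hF1 hx, hxt⟩
  refine ⟨by omega, ?_, ?_, ?_, ?_⟩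
  · intro x hx
    rw [hphi] at hx
    have hb := M_bound hu hu1 hsort hF2 x hx
    have := hu1 x hx
    constructor
    · omega
    · omega
  · rw [htb, hphi, hcard, M_rho hu hu1 hsort, ← M_sdiff hu hu1 hsort, hFs]
  · rw [htb, ← hFs, M_sdiff hu hu1 hsort, rpart_card hu hu1, hdeg]
  · rw [hphi, hcard, M_psi hu hu1 hsort]

lemma backward_block {μ : Multiset ℕ} {aa N : ℕ} (hμ1 : ∀ x ∈ μ, 1 ≤ x)
    (hμc : Multiset.card μ ≤ aa) (hμ2 : ∀ x ∈ μ, x ≤ N - aa) (haN : aa ≤ N) :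
    phiMap (psiMap aa μ) = μ ∧ (psiMap aa μ).card = aa ∧ psiMap aa μ ⊆ Finset.range N ∧
    (∀ y ∈ rhoMap aa μ, aa - Multiset.card μ + 1 ≤ y) ∧
    (rhoMap aa μ).card = Multiset.card μ ∧
    (rhoMap aa μ) ⊆ Finset.range N := by
  set t := aa - Multiset.card μ with htdef
  set u := μ.sort (· ≤ ·) with hudef
  have hcu : (↑u : Multiset ℕ) = μ := Multiset.sort_eq _ _
  have hulen : u.length = Multiset.card μ := Multiset.length_sort _
  have hu : u.Pairwise (· ≤ ·) := Multiset.pairwise_sort _ _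
  have hu1 : ∀ x ∈ u, 1 ≤ x := fun x hx => hμ1 x (by rw [← hcu]; exact Multiset.mem_coe.mpr hx)
  have hu2 : ∀ x ∈ u, x ≤ N - aa := fun x hx => hμ2 x (by rw [← hcu]; exact Multiset.mem_coe.mpr hx)
  set s := (buildL t u).toFinset with hsdef
  have hsort : s.sort (· ≤ ·) = buildL t u := encode_sort t hu hu1
  have hta : t + u.length = aa := by omega
  have hpsi : psiMap aa μ = s := by
    rw [← hcu, ← hta]
    exact M_psi hu hu1 hsort
  have hrho : rhoMap aa μ = rpart t u := rho_eq_rpart aa μ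
  refine ⟨?_, ?_, ?_, ?_, ?_, ?_⟩
  · rw [hpsi, M_phi hu hu1 hsort, hcu]
  · rw [hpsi, M_card hu hu1 hsort]; omega
  · rw [hpsi]
    exact M_subset_range hu hu1 hsort (by omega) (fun x hx => by have := hu2 x hx; omega)
  · rw [hrho]
    intro y hy
    exact mem_rpart_ge hu1 y hy
  · rw [hrho, rpart_card hu hu1, hulen]
  · have h1 : rhoMap aa μ ⊆ psiMap aa μ := Finset.subset_union_right
    intro y hy
    have h2 : psiMap aa μ ⊆ Finset.range N := by
      rw [hpsi]
      exact M_subset_range hu hu1 hsort (by omega) (fun x hx => by have := hu2 x hx; omega)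
    exact h2 (h1 hy)

lemma offF_succ (b : ℕ → ℕ) (i : ℕ) : offF b (i + 1) = offF b i + b i :=
  Finset.sum_range_succ b i

lemma offF_mono (b : ℕ → ℕ) {i j : ℕ} (h : i ≤ j) : offF b i ≤ offF b j := by
  apply Finset.sum_le_sum_of_subset
  exact Finset.range_subset_range.mpr h

lemma range_off_biUnion (b : ℕ → ℕ) (m : ℕ) :
    Finset.range (offF b m) =
      (Finset.range m).biUnion (fun i => Finset.Ico (offF b i) (offF b (i + 1))) := by
  induction m with
  | zero => simp [offF]
  | succ m ih =>
    rw [Finset.range_add_one, Finset.biUnion_insert, ← ih]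
    have h1 := offF_succ b m
    ext x
    simp only [Finset.mem_range, Finset.mem_union, Finset.mem_Ico]
    omega

lemma Ico_off_disjoint (b : ℕ → ℕ) {i j : ℕ} (hij : i ≠ j) :
    Disjoint (Finset.Ico (offF b i) (offF b (i + 1))) (Finset.Ico (offF b j) (offF b (j + 1))) := by
  rw [Finset.disjoint_left]
  intro x hx hx'
  simp only [Finset.mem_Ico] at hx hx'
  rcases lt_or_gt_of_ne hij with h | h
  · have := offF_mono b (show i + 1 ≤ j by omega); omega
  · have := offF_mono b (show j + 1 ≤ i by omega); omega

lemma parts_eq (b : ℕ → ℕ) (m : ℕ) {P : Finset ℕ} (hP : P ⊆ Finset.range (offF b m)) :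
    (Finset.range m).biUnion (fun i => P ∩ Finset.Ico (offF b i) (offF b (i + 1))) = P := by
  ext x
  simp only [Finset.mem_biUnion, Finset.mem_inter, Finset.mem_range]
  constructor
  · rintro ⟨i, _, hx, _⟩; exact hx
  · intro hx
    have h1 : x ∈ Finset.range (offF b m) := hP hx
    rw [range_off_biUnion] at h1
    obtain ⟨i, hi, hxi⟩ := Finset.mem_biUnion.mp h1
    exact ⟨i, by simpa using hi, hx, hxi⟩

lemma parts_card (b : ℕ → ℕ) (m : ℕ) {P : Finset ℕ} (hP : P ⊆ Finset.range (offF b m)) :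
    ∑ i ∈ Finset.range m, (P ∩ Finset.Ico (offF b i) (offF b (i + 1))).card = P.card := by
  rw [← Finset.card_biUnion, parts_eq b m hP]
  intro i _ j _ hij
  exact Finset.disjoint_of_subset_left Finset.inter_subset_right
    (Finset.disjoint_of_subset_right Finset.inter_subset_right (Ico_off_disjoint b hij))

section Glob
variable {b : ℕ → ℕ} {m : ℕ} {S : ℕ → Finset ℕ}

lemma gd_image_subset (hS : ∀ i, i < m → S i ⊆ Finset.range (b i)) {i : ℕ} (hi : i < m) :
    (S i).image (fun j => offF b i + j) ⊆ Finset.Ico (offF b i) (offF b (i + 1)) := by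
  intro x hx
  obtain ⟨j, hj, rfl⟩ := Finset.mem_image.mp hx
  have := hS i hi hj
  simp only [Finset.mem_range] at this
  simp only [Finset.mem_Ico, offF_succ]
  omega

lemma gd_subset (hS : ∀ i, i < m → S i ⊆ Finset.range (b i)) :
    (Finset.range m).biUnion (fun i => (S i).image (fun j => offF b i + j)) ⊆
      Finset.range (offF b m) := by
  intro x hx
  obtain ⟨i, hi, hxi⟩ := Finset.mem_biUnion.mp hx
  rw [Finset.mem_range] at hi
  have h1 := gd_image_subset hS hi hxi
  rw [range_off_biUnion]
  exact Finset.mem_biUnion.mpr ⟨i, by simpa using hi, h1⟩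

lemma gd_inter (hS : ∀ i, i < m → S i ⊆ Finset.range (b i)) {i : ℕ} (hi : i < m) :
    ((Finset.range m).biUnion (fun t => (S t).image (fun j => offF b t + j))) ∩
      Finset.Ico (offF b i) (offF b (i + 1)) = (S i).image (fun j => offF b i + j) := by
  apply Finset.Subset.antisymm
  · intro x hx
    obtain ⟨hx1, hx2⟩ := Finset.mem_inter.mp hx
    obtain ⟨t, ht, hxt⟩ := Finset.mem_biUnion.mp hx1
    rw [Finset.mem_range] at ht
    by_cases hti : t = i
    · subst hti; exact hxt
    · exact absurd hx2 (fun h => Finset.disjoint_left.mp (Ico_off_disjoint b hti)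
        (gd_image_subset hS ht hxt) h)
  · intro x hx
    exact Finset.mem_inter.mpr ⟨Finset.mem_biUnion.mpr ⟨i, by simpa using hi, hx⟩,
      gd_image_subset hS hi hx⟩

lemma gd_card (hS : ∀ i, i < m → S i ⊆ Finset.range (b i)) :
    ((Finset.range m).biUnion (fun i => (S i).image (fun j => offF b i + j))).card =
      ∑ i ∈ Finset.range m, (S i).card := by
  rw [Finset.card_biUnion]
  · apply Finset.sum_congr rfl
    intro i _
    exact Finset.card_image_of_injOn (fun x _ y _ h => by omega)
  · intro i hi j hj hij
    rw [Finset.mem_coe, Finset.mem_range] at hi hj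
    exact Finset.disjoint_of_subset_left (gd_image_subset hS hi)
      (Finset.disjoint_of_subset_right (gd_image_subset hS hj) (Ico_off_disjoint b hij))

lemma gd_shift_back {i : ℕ} (T : Finset ℕ) :
    (T.image (fun j => offF b i + j)).image (fun j => j - offF b i) = T := by
  rw [Finset.image_image]
  have h : ∀ x ∈ T, ((fun j => j - offF b i) ∘ (fun j => offF b i + j)) x = id x := by
    intro x _; simp
  rw [Finset.image_congr h, Finset.image_id]

lemma gd_shift_fwd {i : ℕ} {P : Finset ℕ} (hP : ∀ x ∈ P, offF b i ≤ x) :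
    (P.image (fun j => j - offF b i)).image (fun j => offF b i + j) = P := by
  rw [Finset.image_image]
  have h : ∀ x ∈ P, ((fun j => offF b i + j) ∘ (fun j => j - offF b i)) x = id x := by
    intro x hx; have := hP x hx; simp; omega
  rw [Finset.image_congr h, Finset.image_id]
end Glob

lemma sum_sub_add {m : ℕ} {f g : ℕ → ℕ} (h : ∀ i, i < m → g i ≤ f i) :
    ∑ i ∈ Finset.range m, (f i - g i) + ∑ i ∈ Finset.range m, g i =
      ∑ i ∈ Finset.range m, f i := by
  induction m with
  | zero => simp
  | succ m ih =>
    rw [Finset.sum_range_succ, Finset.sum_range_succ, Finset.sum_range_succ]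
    have h1 := ih (fun i hi => h i (by omega))
    have h2 := h m (by omega)
    omega

lemma forward_main (m d : ℕ) (n a : ℕ → ℕ)
    (hd2 : d ≤ ∑ i ∈ Finset.range m, a i)
    (ha : ∀ i, i < m → 0 < a i ∧ a i ≤ n i) (τ : ℕ → Finset ℕ) (hτ : IsFacetT m d n a τ) :
    InST m d n a (PhiMapT m a n τ) ∧ PsiMapT m d n a (PhiMapT m a n τ) = τ := by
  obtain ⟨hτ1, hτ2, hτ3, hτ4⟩ := hτ
  set μ := PhiMapT m a n τ with hμdef
  set b := bfun a n τ with hbdef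
  have hμsucc : ∀ i, i < m → μ (i + 1) = PhiBlock a n τ i := by
    intro i hi
    simp only [hμdef, PhiMapT]
    rw [if_neg (by omega), if_pos (by omega)]
    norm_num
  have hμ0 : μ 0 = phiMap (globF m b τ) := by
    simp only [hμdef, PhiMapT, if_pos rfl]
    rw [if_pos trivial]
  have hFB := fun (i : ℕ) (hi : i < m) =>
    forward_block (hτ1 i hi) (hτ2 i hi) ((ha i hi).2)
  have hdegle : ∀ i, i < m → Multiset.card (PhiBlock a n τ i) ≤ a i :=
    fun i hi => (hFB i hi).1
  have hbnd : ∀ i, i < m → ∀ x ∈ PhiBlock a n τ i, 1 ≤ x ∧ x ≤ n i - a i :=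
    fun i hi => (hFB i hi).2.1
  have hbeq : ∀ i, b i = a i - Multiset.card (PhiBlock a n τ i) := fun i => rfl
  have hrho : ∀ i, i < m → rhoMap (a i) (PhiBlock a n τ i) = τ i \ Finset.range (b i) :=
    fun i hi => (hFB i hi).2.2.1
  have hsdc : ∀ i, i < m → (τ i \ Finset.range (b i)).card = Multiset.card (PhiBlock a n τ i) :=
    fun i hi => (hFB i hi).2.2.2.1
  have hScard : ∀ i, i < m →
      (τ i ∩ Finset.range (b i)).card + Multiset.card (PhiBlock a n τ i) = (τ i).card := by
    intro i hi
    have := Finset.card_inter_add_card_sdiff (τ i) (Finset.range (b i))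
    have := hsdc i hi
    omega
  have hS : ∀ i, i < m → τ i ∩ Finset.range (b i) ⊆ Finset.range (b i) :=
    fun i _ => Finset.inter_subset_right
  set G := (Finset.range m).biUnion
      (fun i => (τ i ∩ Finset.range (b i)).image (fun j => offF b i + j)) with hGdef
  have hGeq : globF m b τ = G := rfl
  set D := ∑ i ∈ Finset.range m, Multiset.card (PhiBlock a n τ i) with hDdef
  have hDd : D + ∑ i ∈ Finset.range m, (τ i ∩ Finset.range (b i)).card = d := by
    rw [← hτ4, hDdef]
    rw [← Finset.sum_add_distrib]
    apply Finset.sum_congr rfl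
    intro i hi
    have := hScard i (by simpa using hi)
    omega
  have hGcard : G.card + D = d := by
    rw [hGdef, gd_card hS]
    omega
  have hBD : offF b m + D = ∑ i ∈ Finset.range m, a i := by
    have h1 : offF b m = ∑ i ∈ Finset.range m, (a i - Multiset.card (PhiBlock a n τ i)) := by
      apply Finset.sum_congr rfl
      intro i _
      exact hbeq i
    rw [h1, hDdef]
    exact sum_sub_add (fun i hi => hdegle i hi)
  have hGsub : G ⊆ Finset.range (offF b m) := gd_subset hS
  obtain ⟨t0, u0, hu0, hu01, hsort0⟩ := decode G
  have hμ0val : μ 0 = ↑u0 := by rw [hμ0, hGeq]; exact M_phi hu0 hu01 hsort0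
  have hcard0 : G.card = t0 + u0.length := M_card hu0 hu01 hsort0
  have hDle : D ≤ d := by omega
  constructor
  · refine ⟨?_, ?_, ?_, ?_, ?_⟩
    · rw [Finset.sum_range_succ']
      have h1 : ∑ i ∈ Finset.range m, Multiset.card (μ (i + 1)) = D := by
        apply Finset.sum_congr rfl
        intro i hi
        rw [hμsucc i (by simpa using hi)]
      rw [h1, hμ0val]
      simp only [Multiset.coe_card]
      omega
    · intro i hi
      rw [hμsucc i hi]
      exact hdegle i hi
    · intro x hx
      rw [hμ0val] at hx
      have hb1 := hu01 x hx
      have hb2 := M_bound hu0 hu01 hsort0 hGsub x hx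
      exact ⟨hb1, by omega⟩
    · intro i hi x hx
      rw [hμsucc i hi] at hx
      exact hbnd i hi x hx
    · intro i hi
      simp only [hμdef, PhiMapT]
      rw [if_neg (by omega), if_neg (by omega)]
  · funext i
    by_cases hi : i < m
    · simp only [PsiMapT, if_pos hi]
      have hbfun : ∀ t, t < m → a t - Multiset.card (μ (t + 1)) = b t := by
        intro t ht
        rw [hμsucc t ht, hbeq t]
      have eoff : offF (fun t => a t - Multiset.card (μ (t + 1))) i = offF b i := by
        apply Finset.sum_congr rfl
        intro t ht
        exact hbfun t (by simp at ht; omega)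
      have eA : ∑ t ∈ Finset.range m, (a t - Multiset.card (μ (t + 1))) = offF b m := by
        apply Finset.sum_congr rfl
        intro t ht
        exact hbfun t (by simpa using ht)
      have ebi : a i - Multiset.card (μ (i + 1)) = b i := hbfun i hi
      rw [eoff, eA, ebi]
      have eA0 : offF b m - (∑ t ∈ Finset.range m, a t - d) = G.card := by omega
      rw [eA0, hμ0val, hcard0, M_psi hu0 hu01 hsort0, ← offF_succ b i, hGdef,
        gd_inter hS hi, gd_shift_back, hμsucc i hi, hrho i hi, Finset.sdiff_union_inter]
    · simp only [PsiMapT, if_neg hi]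
      exact (hτ3 i (by omega)).symm

lemma backward_main (m d : ℕ) (n a : ℕ → ℕ)
    (hd2 : d ≤ ∑ i ∈ Finset.range m, a i)
    (ha : ∀ i, i < m → 0 < a i ∧ a i ≤ n i) (μ : ℕ → Multiset ℕ) (hμ : InST m d n a μ) :
    IsFacetT m d n a (PsiMapT m d n a μ) ∧ PhiMapT m a n (PsiMapT m d n a μ) = μ := by
  obtain ⟨c1, c2, c3, c4, c5⟩ := hμ
  set τ := PsiMapT m d n a μ with hτdef
  set b := fun t => a t - Multiset.card (μ (t + 1)) with hbdef
  set B := ∑ t ∈ Finset.range m, b t with hBdef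
  set D := ∑ t ∈ Finset.range m, Multiset.card (μ (t + 1)) with hDdef
  set A0 := B - ((∑ t ∈ Finset.range m, a t) - d) with hA0def
  have hc1' : Multiset.card (μ 0) + D ≤ d := by
    rw [Finset.sum_range_succ'] at c1
    omega
  have hBD : B + D = ∑ t ∈ Finset.range m, a t := sum_sub_add (fun i hi => c2 i hi)
  have hDd : D ≤ d := by omega
  have hA0' : A0 = d - D := by omega
  have hbb0 := backward_block (μ := μ 0) (aa := A0) (N := B)
      (fun x hx => (c3 x hx).1) (by omega)
      (fun x hx => by have := (c3 x hx).2; omega) (by omega)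
  set P := psiMap A0 (μ 0) with hPdef
  obtain ⟨hP1, hP2, hP3, _, _, _⟩ := hbb0
  have hPsub : P ⊆ Finset.range (offF b m) := hP3
  have hbbi := fun (i : ℕ) (hi : i < m) =>
    backward_block (μ := μ (i + 1)) (aa := a i) (N := n i)
      (fun x hx => (c4 i hi x hx).1) (c2 i hi) (fun x hx => (c4 i hi x hx).2) ((ha i hi).2)
  have hbi : ∀ i, a i - Multiset.card (μ (i + 1)) = b i := fun i => by rw [hbdef]
  have hτi : ∀ i, i < m → τ i = rhoMap (a i) (μ (i + 1)) ∪
      ((P ∩ Finset.Ico (offF b i) (offF b (i + 1))).image (fun j => j - offF b i)) := by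
    intro i hi
    rw [offF_succ]
    simp only [hτdef, PsiMapT, if_pos hi, hPdef, hA0def, hBdef, hbdef]
  have hτempty : ∀ i, m ≤ i → τ i = ∅ := by
    intro i hi
    simp only [hτdef, PsiMapT, if_neg (by omega : ¬ i < m)]
  have hQsub : ∀ i, i < m →
      (P ∩ Finset.Ico (offF b i) (offF b (i + 1))).image (fun j => j - offF b i) ⊆
        Finset.range (b i) := by
    intro i hi x hx
    obtain ⟨y, hy, rfl⟩ := Finset.mem_image.mp hx
    have hy2 := Finset.mem_inter.mp hy |>.2
    rw [Finset.mem_Ico, offF_succ] at hy2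
    simp only [Finset.mem_range]
    omega
  have hQimg : ∀ i, i < m →
      (((P ∩ Finset.Ico (offF b i) (offF b (i + 1))).image (fun j => j - offF b i)).image
        (fun j => offF b i + j)) = P ∩ Finset.Ico (offF b i) (offF b (i + 1)) := by
    intro i hi
    apply gd_shift_fwd
    intro x hx
    have := Finset.mem_inter.mp hx |>.2
    rw [Finset.mem_Ico] at this
    omega
  have hQcard : ∀ i, i < m →
      ((P ∩ Finset.Ico (offF b i) (offF b (i + 1))).image (fun j => j - offF b i)).card =
        (P ∩ Finset.Ico (offF b i) (offF b (i + 1))).card := by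
    intro i hi
    apply Finset.card_image_of_injOn
    intro x hx y hy hxy
    have h1 := Finset.mem_inter.mp hx |>.2
    have h2 := Finset.mem_inter.mp hy |>.2
    rw [Finset.mem_Ico] at h1 h2
    dsimp only at hxy
    omega
  have hRge : ∀ i, i < m → ∀ y ∈ rhoMap (a i) (μ (i + 1)), b i + 1 ≤ y := by
    intro i hi y hy
    have h1 := (hbbi i hi).2.2.2.1 y hy
    have h2 := hbi i
    omega
  have hRsub : ∀ i, i < m → rhoMap (a i) (μ (i + 1)) ⊆ Finset.range (n i) :=
    fun i hi => (hbbi i hi).2.2.2.2.2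
  have hRcard : ∀ i, i < m → (rhoMap (a i) (μ (i + 1))).card = Multiset.card (μ (i + 1)) :=
    fun i hi => (hbbi i hi).2.2.2.2.1
  have hdisj : ∀ i, i < m → Disjoint (rhoMap (a i) (μ (i + 1)))
      ((P ∩ Finset.Ico (offF b i) (offF b (i + 1))).image (fun j => j - offF b i)) := by
    intro i hi
    rw [Finset.disjoint_left]
    intro x hx hx'
    have h1 := hRge i hi x hx
    have h2 := hQsub i hi hx'
    simp only [Finset.mem_range] at h2
    omega
  have hτcard : ∀ i, i < m → (τ i).card =
      Multiset.card (μ (i + 1)) + (P ∩ Finset.Ico (offF b i) (offF b (i + 1))).card := by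
    intro i hi
    rw [hτi i hi, Finset.card_union_of_disjoint (hdisj i hi), hRcard i hi, hQcard i hi]
  -- fillF computation
  have hfill : ∀ i, i < m → fillF (τ i) (a i) (n i) = psiMap (a i) (μ (i + 1)) := by
    intro i hi
    rw [hτi i hi, Finset.union_comm]
    have h1 := fill_eq (Q := (P ∩ Finset.Ico (offF b i) (offF b (i + 1))).image
        (fun j => j - offF b i)) (R := rhoMap (a i) (μ (i + 1))) (b := b i) (N := n i)
        (aa := a i) (hQsub i hi)
        (fun x hx => by have := hRge i hi x hx; omega)
        (hRsub i hi)
        (by have h2 := c2 i hi; have h3 := (ha i hi).2; have := hbi i; omega)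
        (by have := hbi i; have := c2 i hi; omega)
        (by rw [hRcard i hi]; have := hbi i; have := c2 i hi; omega)
    rw [h1, psiMap, hbi i]
  have hPhiBlock : ∀ i, i < m → PhiBlock a n τ i = μ (i + 1) := by
    intro i hi
    rw [PhiBlock, hfill i hi]
    exact (hbbi i hi).1
  have hbfun_eq : ∀ i, i < m → bfun a n τ i = b i := by
    intro i hi
    rw [bfun, hPhiBlock i hi, hbi i]
  constructor
  · refine ⟨?_, ?_, hτempty, ?_⟩
    · intro i hi
      rw [hτi i hi]
      apply Finset.union_subset (hRsub i hi)
      intro x hx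
      have h1 := hQsub i hi hx
      simp only [Finset.mem_range] at h1 ⊢
      have h2 := hbi i
      have h3 := (ha i hi).2
      omega
    · intro i hi
      rw [hτcard i hi]
      have h1 : (P ∩ Finset.Ico (offF b i) (offF b (i + 1))).card ≤ b i := by
        calc (P ∩ Finset.Ico (offF b i) (offF b (i + 1))).card
            = ((P ∩ Finset.Ico (offF b i) (offF b (i + 1))).image
                (fun j => j - offF b i)).card := (hQcard i hi).symm
          _ ≤ (Finset.range (b i)).card := Finset.card_le_card (hQsub i hi)
          _ = b i := Finset.card_range _
      have := hbi i
      have := c2 i hi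
      omega
    · have h1 : ∑ i ∈ Finset.range m, (τ i).card =
          D + ∑ i ∈ Finset.range m, (P ∩ Finset.Ico (offF b i) (offF b (i + 1))).card := by
        rw [hDdef, ← Finset.sum_add_distrib]
        apply Finset.sum_congr rfl
        intro i hi
        rw [hτcard i (by simpa using hi)]
      rw [h1, parts_card b m hPsub, hP2]
      omega
  · funext j
    rcases j with _ | i
    · simp only [PhiMapT, if_pos rfl]
      rw [if_pos trivial]
      have hglob : globF m (bfun a n τ) τ = P := by
        rw [globF]
        have h1 : ∀ i ∈ Finset.range m,
            (τ i ∩ Finset.range (bfun a n τ i)).image (fun j => offF (bfun a n τ) i + j) =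
            P ∩ Finset.Ico (offF b i) (offF b (i + 1)) := by
          intro i hi'
          have hi : i < m := by simpa using hi'
          have hoff : offF (bfun a n τ) i = offF b i := by
            apply Finset.sum_congr rfl
            intro t ht
            exact hbfun_eq t (by simp at ht; omega)
          have hQ : τ i ∩ Finset.range (bfun a n τ i) =
              (P ∩ Finset.Ico (offF b i) (offF b (i + 1))).image (fun j => j - offF b i) := by
            rw [hbfun_eq i hi, hτi i hi, Finset.union_inter_distrib_right]
            have h2 : rhoMap (a i) (μ (i + 1)) ∩ Finset.range (b i) = ∅ := by
              rw [Finset.eq_empty_iff_forall_notMem]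
              intro x hx
              obtain ⟨hx1, hx2⟩ := Finset.mem_inter.mp hx
              have := hRge i hi x hx1
              simp only [Finset.mem_range] at hx2
              omega
            rw [h2, Finset.empty_union,
              Finset.inter_eq_left.mpr (hQsub i hi)]
          rw [hQ, hoff, hQimg i hi]
        rw [Finset.biUnion_congr rfl h1, parts_eq b m hPsub]
      rw [hglob, hP1]
    · by_cases hi : i < m
      · simp only [PhiMapT]
        rw [if_neg (by omega), if_pos (by omega)]
        have : i + 1 - 1 = i := by omega
        rw [this, hPhiBlock i hi]
      · simp only [PhiMapT]
        rw [if_neg (by omega), if_neg (by omega)]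
        exact (c5 (i + 1) (by omega)).symm

/-- `Φ` and `Ψ` are mutually inverse bijections between the facets of `Λ_d` and the
monomials of `S_d(X,(∞,a))`. -/
theorem stmt10 (m d : ℕ) (n a : ℕ → ℕ)
    (hd1 : 1 ≤ d) (hd2 : d ≤ ∑ i ∈ Finset.range m, a i)
    (ha : ∀ i, i < m → 0 < a i ∧ a i ≤ n i) :
    (∀ τ : ℕ → Finset ℕ, IsFacetT m d n a τ →
      InST m d n a (PhiMapT m a n τ) ∧ PsiMapT m d n a (PhiMapT m a n τ) = τ) ∧
    (∀ μ : ℕ → Multiset ℕ, InST m d n a μ →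
      IsFacetT m d n a (PsiMapT m d n a μ) ∧ PhiMapT m a n (PsiMapT m d n a μ) = μ) := by
  exact ⟨fun τ hτ => forward_main m d n a hd2 ha τ hτ,
    fun μ hμ => backward_main m d n a hd2 ha μ hμ⟩
end

section
/- Let τ be a facet of Λ_d, γ ⊂ τ a proper subset not containing R(τ), and let bk(τ,γ) := (τ − v) ∪ w be the swap facet (v ∈ R(τ) − γ, w = Gap(τ) if v ∈ tail(τ), else w = fgap(τ,i) for v ∈ up(τ)∩V_i). Then |R(bk(τ,γ))| ≤ |R(τ)|; indeed R(bk(τ,γ)) ⊆ (R(τ) ∪ {w}) − {v}. -/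
open Finset

/-- The block-`i` part of `up(τ)`. -/
def upT (a n : ℕ → ℕ) (τ : ℕ → Finset ℕ) (i : ℕ) : Finset ℕ :=
  if (τ i).card = a i then
    (τ i).filter (fun j => ∃ g ∈ Finset.range (n i) \ τ i, g < j) else ∅

/-- The block-`i` part of `tail(τ)`. -/
def tailT (m : ℕ) (a n : ℕ → ℕ) (τ : ℕ → Finset ℕ) (i : ℕ) : Finset ℕ :=
  (τ i).filter (fun j => ∃ i₀, i₀ < m ∧ (τ i₀).card < a i₀ ∧
    (∀ t, t < i₀ → (τ t).card = a t) ∧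
    (i₀ < i ∨ (i₀ = i ∧ ∃ g, g < j ∧ g ∉ τ i ∧ g < n i)))


private lemma mem_tail_of_lt {m t : ℕ} {n a : ℕ → ℕ} {σ : ℕ → Finset ℕ} (ht : t < m)
    (hc : ∀ s, s ≤ t → (σ s).card ≤ a s) {j : ℕ} (hjσ : j ∈ σ t)
    {i' : ℕ} (hi't : i' < t) (hdef : (σ i').card < a i') :
    j ∈ tailT m a n σ t := by
  classical
  have hex : ∃ i, (σ i).card < a i := ⟨i', hdef⟩
  have hkdef : (σ (Nat.find hex)).card < a (Nat.find hex) := Nat.find_spec hex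
  have hki : Nat.find hex ≤ i' := Nat.find_min' hex hdef
  unfold tailT
  refine Finset.mem_filter.2 ⟨hjσ, Nat.find hex, by omega, hkdef, ?_, Or.inl (by omega)⟩
  intro s hs
  have h1 := Nat.find_min hex hs
  have h2 := hc s (by omega)
  omega

private lemma mem_S_iff {m t : ℕ} {n a : ℕ → ℕ} {σ : ℕ → Finset ℕ} (ht : t < m)
    (hc : ∀ s, s ≤ t → (σ s).card ≤ a s) (j : ℕ) :
    j ∈ upT a n σ t ∪ tailT m a n σ t ↔
      j ∈ σ t ∧ ((∃ i', i' < t ∧ (σ i').card < a i') ∨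
        ∃ g, g < j ∧ g ∉ σ t ∧ g < n t) := by
  classical
  constructor
  · intro hj
    rcases Finset.mem_union.1 hj with h | h
    · unfold upT at h
      split_ifs at h with hfull
      · obtain ⟨hjσ, g, hg, hgj⟩ := Finset.mem_filter.1 h
        obtain ⟨hg1, hg2⟩ := Finset.mem_sdiff.1 hg
        exact ⟨hjσ, Or.inr ⟨g, hgj, hg2, Finset.mem_range.1 hg1⟩⟩
      · exact absurd h (Finset.notMem_empty j)
    · unfold tailT at h
      obtain ⟨hjσ, i', _, hdef, _, hcase⟩ := Finset.mem_filter.1 h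
      refine ⟨hjσ, ?_⟩
      rcases hcase with h1 | ⟨rfl, g, hg1, hg2, hg3⟩
      · exact Or.inl ⟨i', h1, hdef⟩
      · exact Or.inr ⟨g, hg1, hg2, hg3⟩
  · rintro ⟨hjσ, h | ⟨g, hgj, hgσ, hgn⟩⟩
    · obtain ⟨i', hi't, hdef⟩ := h
      exact Finset.mem_union_right _ (mem_tail_of_lt ht hc hjσ hi't hdef)
    · by_cases hfull : (σ t).card = a t
      · refine Finset.mem_union_left _ ?_
        unfold upT
        rw [if_pos hfull]
        exact Finset.mem_filter.2 ⟨hjσ, g,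
          Finset.mem_sdiff.2 ⟨Finset.mem_range.2 hgn, hgσ⟩, hgj⟩
      · have hdeft : (σ t).card < a t := lt_of_le_of_ne (hc t le_rfl) hfull
        by_cases hlt : ∃ i', i' < t ∧ (σ i').card < a i'
        · obtain ⟨i', h1, h2⟩ := hlt
          exact Finset.mem_union_right _ (mem_tail_of_lt ht hc hjσ h1 h2)
        · refine Finset.mem_union_right _ ?_
          unfold tailT
          refine Finset.mem_filter.2 ⟨hjσ, t, ht, hdeft, ?_,
            Or.inr ⟨rfl, g, hgj, hgσ, hgn⟩⟩
          intro s hs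
          have h1 := hc s (le_of_lt hs)
          have h2 : ¬ (σ s).card < a s := fun hh => hlt ⟨s, hs, hh⟩
          omega


/-- For the swap facet `bk(τ,γ) = (τ - v) ∪ w` (where `v ∈ R(τ)` lies in block `iv` with
index `jv`, and `w` is `Gap(τ)` resp. `fgap(τ,iv)`, in block `i₀` with index `j₀`), the
restriction satisfies `R(bk(τ,γ)) ⊆ (R(τ) ∪ {w}) - {v}`; in particular
`|R(bk(τ,γ))| ≤ |R(τ)|`. -/
theorem stmt13 (m d : ℕ) (n a : ℕ → ℕ)
    (hd1 : 1 ≤ d) (hd2 : d ≤ ∑ i ∈ Finset.range m, a i)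
    (ha : ∀ i, i < m → 0 < a i ∧ a i ≤ n i)
    (τ : ℕ → Finset ℕ) (hτ : IsFacetT m d n a τ)
    (iv jv i₀ j₀ : ℕ) (hiv : iv < m)
    (hswap :
      (jv ∈ tailT m a n τ iv ∧ i₀ < m ∧ (τ i₀).card < a i₀ ∧
        (∀ t, t < i₀ → (τ t).card = a t) ∧ j₀ < n i₀ ∧ j₀ ∉ τ i₀ ∧
        (∀ g, g < j₀ → g ∈ τ i₀)) ∨
      (jv ∈ upT a n τ iv ∧ i₀ = iv ∧ j₀ < n iv ∧ j₀ ∉ τ iv ∧ (∀ g, g < j₀ → g ∈ τ iv)))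
    (τ' : ℕ → Finset ℕ)
    (hτ' : τ' = fun t => (if t = i₀ then insert j₀ else id)
        (if t = iv then (τ t).erase jv else τ t)) :
    (∀ t, t < m →
      upT a n τ' t ∪ tailT m a n τ' t ⊆
        (if t = iv then
          (upT a n τ t ∪ tailT m a n τ t ∪ (if t = i₀ then {j₀} else ∅)).erase jv
        else upT a n τ t ∪ tailT m a n τ t ∪ (if t = i₀ then {j₀} else ∅))) ∧
    (∑ t ∈ Finset.range m, (upT a n τ' t ∪ tailT m a n τ' t).card
      ≤ ∑ t ∈ Finset.range m, (upT a n τ t ∪ tailT m a n τ t).card) := by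
  classical
  obtain ⟨hτrng, hτcard, hτzero, hτsum⟩ := hτ
  -- basic facts extracted from hswap
  have hjvS : jv ∈ upT a n τ iv ∪ tailT m a n τ iv := by
    rcases hswap with ⟨h, _⟩ | ⟨h, _⟩
    · exact Finset.mem_union_right _ h
    · exact Finset.mem_union_left _ h
  have hjvτ : jv ∈ τ iv := by
    rcases hswap with ⟨h, _⟩ | ⟨h, _⟩
    · unfold tailT at h
      exact (Finset.mem_filter.1 h).1
    · unfold upT at h
      split_ifs at h with hf
      · exact (Finset.mem_filter.1 h).1
      · exact absurd h (Finset.notMem_empty jv)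
  have hi₀m : i₀ < m := by
    rcases hswap with ⟨_, h, _⟩ | ⟨_, rfl, _⟩
    · exact h
    · exact hiv
  have hj₀τ : j₀ ∉ τ i₀ := by
    rcases hswap with ⟨_, _, _, _, _, h, _⟩ | ⟨_, rfl, _, h, _⟩ <;> exact h
  have hj₀n : j₀ < n i₀ := by
    rcases hswap with ⟨_, _, _, _, h, _, _⟩ | ⟨_, rfl, h, _, _⟩ <;> exact h
  have hmain : (i₀ < iv ∧ (τ i₀).card < a i₀ ∧ (∀ t, t < i₀ → (τ t).card = a t)) ∨
      (i₀ = iv ∧ j₀ < jv) := by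
    rcases hswap with ⟨htl, _, hdef₀, hpre₀, _, hj0, hmin⟩ | ⟨hup, rfl, _, hj0, hmin⟩
    · unfold tailT at htl
      obtain ⟨_, i', hi'm, hi'def, hi'pre, hi'case⟩ := Finset.mem_filter.1 htl
      have hii : i' = i₀ := by
        rcases lt_trichotomy i' i₀ with h | h | h
        · have := hpre₀ i' h; omega
        · exact h
        · have := hi'pre i₀ h; omega
      subst hii
      rcases hi'case with h | ⟨heq, g, hg1, hg2, _⟩
      · exact Or.inl ⟨h, hi'def, hpre₀⟩
      · subst heq
        have hng : ¬ g < j₀ := fun hh => hg2 (hmin g hh)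
        exact Or.inr ⟨rfl, by omega⟩
    · unfold upT at hup
      split_ifs at hup with hf
      · obtain ⟨_, g, hg, hgj⟩ := Finset.mem_filter.1 hup
        obtain ⟨_, hg2⟩ := Finset.mem_sdiff.1 hg
        have hng : ¬ g < j₀ := fun hh => hg2 (hmin g hh)
        exact Or.inr ⟨rfl, by omega⟩
      · exact absurd hup (Finset.notMem_empty jv)
  -- description of τ' blockwise
  have hτ'of : ∀ s, s ≠ iv → s ≠ i₀ → τ' s = τ s := by
    intro s h1 h2; simp [hτ', h1, h2]
  have hτ'iv : i₀ ≠ iv → τ' iv = (τ iv).erase jv := by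
    intro h; simp [hτ', Ne.symm h]
  have hτ'i₀ : i₀ ≠ iv → τ' i₀ = insert j₀ (τ i₀) := by
    intro h; simp [hτ', h]
  have hτ'eq : i₀ = iv → τ' iv = insert j₀ ((τ iv).erase jv) := by
    intro h; simp [hτ', h]
  have hcardeq : i₀ = iv → ∀ s, (τ' s).card = (τ s).card := by
    intro heq s
    by_cases h : s = iv
    · subst h
      have hj0iv : j₀ ∉ τ s := by rw [← heq]; exact hj₀τ
      rw [hτ'eq heq,
        Finset.card_insert_of_notMem (fun hh => hj0iv (Finset.mem_of_mem_erase hh)),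
        Finset.card_erase_of_mem hjvτ]
      have hpos : 0 < (τ s).card := Finset.card_pos.2 ⟨jv, hjvτ⟩
      omega
    · rw [hτ'of s h (by omega)]
  have hcard' : ∀ s, s < m → (τ' s).card ≤ a s := by
    intro s hs
    by_cases h1 : s = iv
    · subst h1
      by_cases h2 : i₀ = s
      · rw [hτ'eq h2]
        have h3 := Finset.card_insert_le j₀ ((τ s).erase jv)
        rw [Finset.card_erase_of_mem hjvτ] at h3
        have h4 : 0 < (τ s).card := Finset.card_pos.2 ⟨jv, hjvτ⟩
        have h5 := hτcard s hs
        omega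
      · rw [hτ'iv h2]
        exact le_trans (Finset.card_le_card (Finset.erase_subset _ _)) (hτcard s hs)
    · by_cases h2 : s = i₀
      · rcases hmain with ⟨hlt, hdef₀, _⟩ | ⟨heq, _⟩
        · subst h2
          rw [hτ'i₀ (by omega)]
          have h3 := Finset.card_insert_le j₀ (τ s)
          omega
        · omega
      · rw [hτ'of s h1 h2]
        exact hτcard s hs
  have part1 : ∀ t, t < m →
      upT a n τ' t ∪ tailT m a n τ' t ⊆
        (if t = iv then
          (upT a n τ t ∪ tailT m a n τ t ∪ (if t = i₀ then {j₀} else ∅)).erase jv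
        else upT a n τ t ∪ tailT m a n τ t ∪ (if t = i₀ then {j₀} else ∅)) := by
    intro t ht j hj
    have hc' : ∀ s, s ≤ t → (τ' s).card ≤ a s := fun s hs => hcard' s (by omega)
    have hcτ : ∀ s, s ≤ t → (τ s).card ≤ a s := fun s hs => hτcard s (by omega)
    rw [mem_S_iff ht hc'] at hj
    obtain ⟨hjτ', hcond⟩ := hj
    split_ifs with h1 h2 h3
    · -- t = iv and t = i₀ : same-block swap
      rcases hmain with ⟨hlt, _, _⟩ | ⟨heq, hj₀jv⟩
      · omega
      have hτ't : τ' t = insert j₀ ((τ t).erase jv) := by rw [h1]; exact hτ'eq heq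
      rw [hτ't] at hjτ'
      have hjne : j ≠ jv := by
        rcases Finset.mem_insert.1 hjτ' with rfl | hh
        · omega
        · exact Finset.ne_of_mem_erase hh
      refine Finset.mem_erase.2 ⟨hjne, ?_⟩
      by_cases hjj : j = j₀
      · exact Finset.mem_union_right _ (by simp [hjj])
      · have hjτ : j ∈ τ t :=
          Finset.mem_of_mem_erase ((Finset.mem_insert.1 hjτ').resolve_left hjj)
        refine Finset.mem_union_left _ ?_
        rw [mem_S_iff ht hcτ]
        refine ⟨hjτ, ?_⟩
        rcases hcond with ⟨i', hi't, hdf⟩ | ⟨g, hgj, hgτ', hgn⟩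
        · exact Or.inl ⟨i', hi't, by rw [hcardeq heq i'] at hdf; exact hdf⟩
        · by_cases hgv : g = jv
          · exact Or.inr ⟨j₀, by omega, by rw [h2]; exact hj₀τ, by rw [h2]; exact hj₀n⟩
          · refine Or.inr ⟨g, hgj, ?_, hgn⟩
            intro hgt
            refine hgτ' ?_
            rw [hτ't]
            exact Finset.mem_insert_of_mem (Finset.mem_erase.2 ⟨hgv, hgt⟩)
    · -- t = iv, t ≠ i₀
      rcases hmain with ⟨hlt, hdef₀, hpre₀⟩ | ⟨heq, _⟩
      · have hτ't : τ' t = (τ t).erase jv := by rw [h1]; exact hτ'iv (by omega)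
        rw [hτ't] at hjτ'
        refine Finset.mem_erase.2 ⟨Finset.ne_of_mem_erase hjτ', ?_⟩
        refine Finset.mem_union_left _ ?_
        rw [mem_S_iff ht hcτ]
        exact ⟨Finset.mem_of_mem_erase hjτ', Or.inl ⟨i₀, by omega, hdef₀⟩⟩
      · omega
    · -- t = i₀, t ≠ iv
      rcases hmain with ⟨hlt, hdef₀, hpre₀⟩ | ⟨heq, _⟩
      swap
      · omega
      have hτ't : τ' t = insert j₀ (τ t) := by rw [h3]; exact hτ'i₀ (by omega)
      rw [hτ't] at hjτ'
      by_cases hjj : j = j₀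
      · exact Finset.mem_union_right _ (by simp [hjj])
      · have hjτ : j ∈ τ t := (Finset.mem_insert.1 hjτ').resolve_left hjj
        refine Finset.mem_union_left _ ?_
        rw [mem_S_iff ht hcτ]
        refine ⟨hjτ, ?_⟩
        rcases hcond with ⟨i', hi't, hdf⟩ | ⟨g, hgj, hgτ', hgn⟩
        · exfalso
          rw [hτ'of i' (by omega) (by omega)] at hdf
          have := hpre₀ i' (by omega)
          omega
        · refine Or.inr ⟨g, hgj, ?_, hgn⟩
          intro hgt
          exact hgτ' (by rw [hτ't]; exact Finset.mem_insert_of_mem hgt)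
    · -- t ≠ iv, t ≠ i₀
      have hτ't : τ' t = τ t := hτ'of t h1 h3
      rw [hτ't] at hjτ'
      refine Finset.mem_union_left _ ?_
      rw [mem_S_iff ht hcτ]
      refine ⟨hjτ', ?_⟩
      rcases hmain with ⟨hlt, hdef₀, hpre₀⟩ | ⟨heq, _⟩
      · by_cases hti : i₀ < t
        · exact Or.inl ⟨i₀, hti, hdef₀⟩
        · rcases hcond with ⟨i', hi't, hdf⟩ | ⟨g, hgj, hgτ', hgn⟩
          · exfalso
            rw [hτ'of i' (by omega) (by omega)] at hdf
            have := hpre₀ i' (by omega)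
            omega
          · exact Or.inr ⟨g, hgj, by rwa [hτ't] at hgτ', hgn⟩
      · rcases hcond with ⟨i', hi't, hdf⟩ | ⟨g, hgj, hgτ', hgn⟩
        · exact Or.inl ⟨i', hi't, by rw [hcardeq heq i'] at hdf; exact hdf⟩
        · exact Or.inr ⟨g, hgj, by rwa [hτ't] at hgτ', hgn⟩
  refine ⟨part1, ?_⟩
  have hsum1 : ∑ t ∈ Finset.range m, (upT a n τ' t ∪ tailT m a n τ' t).card ≤
      ∑ t ∈ Finset.range m, ((if t = iv then
        (upT a n τ t ∪ tailT m a n τ t ∪ (if t = i₀ then {j₀} else ∅)).erase jv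
        else upT a n τ t ∪ tailT m a n τ t ∪ (if t = i₀ then {j₀} else ∅))).card :=
    Finset.sum_le_sum fun t htm => Finset.card_le_card (part1 t (Finset.mem_range.1 htm))
  have hsum2 : ∀ t ∈ Finset.range m,
      ((if t = iv then
        (upT a n τ t ∪ tailT m a n τ t ∪ (if t = i₀ then {j₀} else ∅)).erase jv
        else upT a n τ t ∪ tailT m a n τ t ∪ (if t = i₀ then {j₀} else ∅))).card
        + (if t = iv then 1 else 0) ≤
      (upT a n τ t ∪ tailT m a n τ t).card + (if t = i₀ then 1 else 0) := by
    intro t _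
    have hle : (upT a n τ t ∪ tailT m a n τ t ∪ (if t = i₀ then {j₀} else ∅)).card ≤
        (upT a n τ t ∪ tailT m a n τ t).card + (if t = i₀ then 1 else 0) := by
      refine le_trans (Finset.card_union_le _ _) ?_
      have hite : (if t = i₀ then ({j₀} : Finset ℕ) else ∅).card ≤ (if t = i₀ then 1 else 0) := by
        split_ifs <;> simp
      omega
    by_cases h : t = iv
    · subst h
      rw [if_pos rfl, if_pos rfl]
      have hjvmem : jv ∈ upT a n τ t ∪ tailT m a n τ t ∪ (if t = i₀ then {j₀} else ∅) :=
        Finset.mem_union_left _ hjvS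
      rw [Finset.card_erase_of_mem hjvmem]
      have hpos : 0 < (upT a n τ t ∪ tailT m a n τ t ∪ (if t = i₀ then {j₀} else ∅)).card :=
        Finset.card_pos.2 ⟨jv, hjvmem⟩
      omega
    · rw [if_neg h, if_neg h]
      omega
  have hsum3 := Finset.sum_le_sum hsum2
  rw [Finset.sum_add_distrib, Finset.sum_add_distrib,
    Finset.sum_ite_eq' (Finset.range m) iv (fun _ => (1 : ℕ)),
    Finset.sum_ite_eq' (Finset.range m) i₀ (fun _ => (1 : ℕ)),
    if_pos (Finset.mem_range.2 hiv), if_pos (Finset.mem_range.2 hi₀m)] at hsum3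
  omega
end

section
/- Suppose a (0)-compressed multicomplex M ⊆ S_d(X,(∞,a)) is given, and let Γ be the simplicial complex generated by the facets Φ^{-1}(M) of Λ_d. Then Γ is shellable (the revlex order on its facets is a shelling whose restriction function is the restriction of that of Λ_d), and h(Γ) = F(M). -/
open Finset

variable {V : Type*} [Fintype V] [LinearOrder V]
variable {W : Type*} [Fintype W] [LinearOrder W]

/-- Facets of `Λ_d`: colors of vertices lie in `{1,…,m}`, and a facet is a `d`-set meeting
the `i`-th color class in at most `a i` vertices.  The listing order `≻` is `>`. -/
def IsFacetF (c : V → ℕ) (a : ℕ → ℕ) (m d : ℕ) (τ : Finset V) : Prop :=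
  τ.card = d ∧ ∀ i ∈ Finset.Icc 1 m, (τ.filter (fun v => c v = i)).card ≤ a i

/-- Revlex order on equal-size subsets. -/
def RevGT (S T : Finset V) : Prop :=
  ∃ v ∈ T, v ∉ S ∧ ∀ w, w < v → (w ∈ S ↔ w ∈ T)

open Classical in
/-- The restriction function of the revlex shelling of `Λ_d`. -/
noncomputable def Rres (c : V → ℕ) (a : ℕ → ℕ) (m d : ℕ) (τ : Finset V) : Finset V :=
  τ.filter (fun v => ∃ τ', IsFacetF c a m d τ' ∧ RevGT τ' τ ∧ τ.erase v ⊆ τ')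

def degM (μ : W →₀ ℕ) : ℕ := ∑ x, μ x

def degC (cx : W → ℕ) (i : ℕ) (μ : W →₀ ℕ) : ℕ :=
  ∑ x ∈ Finset.univ.filter (fun x => cx x = i), μ x

/-- Membership in `S_d(X,(∞,a))` (variable colors in `{0,…,m}`; color `0` is `X₀`). -/
def InS (cx : W → ℕ) (a : ℕ → ℕ) (m d : ℕ) (μ : W →₀ ℕ) : Prop :=
  degM μ ≤ d ∧ ∀ i, 1 ≤ i → i ≤ m → degC cx i μ ≤ a i

def MonRevGTOn (P : W → Prop) (μ ν : W →₀ ℕ) : Prop :=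
  ∃ x, P x ∧ μ x < ν x ∧ ∀ y, P y → y < x → μ y = ν y

def DivClosed (M : Finset (W →₀ ℕ)) : Prop :=
  ∀ μ ∈ M, ∀ ν : W →₀ ℕ, (∀ x, ν x ≤ μ x) → ν ∈ M

def Compressed0i (cx : W → ℕ) (a : ℕ → ℕ) (m d i : ℕ) (M : Finset (W →₀ ℕ)) : Prop :=
  ∀ μ ∈ M, ∀ μ' : W →₀ ℕ, InS cx a m d μ' → degM μ' = degM μ →
    (∀ x, cx x ≠ 0 → cx x ≠ i → μ' x = μ x) →
    MonRevGTOn (fun x => cx x = 0 ∨ cx x = i) μ' μ → μ' ∈ M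


section AuxVal
set_option linter.unusedSectionVars false
noncomputable def rkV (v : V) : ℕ := (Finset.univ.filter (fun w => v < w)).card

lemma rkV_anti {v u : V} (h : v < u) : rkV u < rkV v := by
  apply Finset.card_lt_card
  constructor
  · intro w hw
    simp only [mem_filter, mem_univ, true_and] at hw ⊢
    exact h.trans hw
  · intro hsub
    have := hsub (by simp [h] : u ∈ univ.filter (fun w => v < w))
    simp at this

lemma rkV_inj : Function.Injective (rkV (V := V)) := by
  intro x y hxy
  rcases lt_trichotomy x y with h | h | h
  · exact absurd hxy (rkV_anti h).ne'
  · exact h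
  · exact absurd hxy (rkV_anti h).ne

noncomputable def valV (S : Finset V) : ℕ := ∑ v ∈ S, 2 ^ rkV v

lemma sum_two_pow_lt {A : Finset V} {N : ℕ} (h : ∀ u ∈ A, rkV u < N) :
    ∑ u ∈ A, 2 ^ rkV u < 2 ^ N := by
  calc ∑ u ∈ A, 2 ^ rkV u = ∑ j ∈ A.image rkV, 2 ^ j := by
        rw [Finset.sum_image (fun x _ y _ hxy => rkV_inj hxy)]
    _ ≤ ∑ j ∈ Finset.range N, 2 ^ j := by
        apply Finset.sum_le_sum_of_subset
        intro j hj
        simp only [mem_image] at hj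
        obtain ⟨u, hu, rfl⟩ := hj
        exact Finset.mem_range.mpr (h u hu)
    _ < 2 ^ N := by
        have hgeom : ∀ N : ℕ, ∑ j ∈ Finset.range N, 2 ^ j = 2 ^ N - 1 := by
          intro N
          induction N with
          | zero => simp
          | succ n ih =>
            have h1 : 1 ≤ 2 ^ n := Nat.one_le_two_pow
            rw [Finset.sum_range_succ, ih]
            ring_nf
            omega
        have h2 : 1 ≤ 2 ^ N := Nat.one_le_two_pow
        have := hgeom N
        omega

lemma valV_lt_of_revGT {S T : Finset V} (h : RevGT S T) : valV S < valV T := by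
  obtain ⟨v, hvT, hvS, hb⟩ := h
  classical
  have hsplitS := Finset.sum_filter_add_sum_filter_not S (fun w => w < v) (fun v => 2 ^ rkV v)
  have hsplitT := Finset.sum_filter_add_sum_filter_not T (fun w => w < v) (fun v => 2 ^ rkV v)
  have hlow : S.filter (fun w => w < v) = T.filter (fun w => w < v) := by
    ext w; simp only [mem_filter]
    constructor
    · rintro ⟨hw, hlt⟩; exact ⟨(hb w hlt).mp hw, hlt⟩
    · rintro ⟨hw, hlt⟩; exact ⟨(hb w hlt).mpr hw, hlt⟩
  have hShigh : ∑ u ∈ S.filter (fun w => ¬ w < v), 2 ^ rkV u < 2 ^ rkV v := by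
    apply sum_two_pow_lt
    intro u hu
    simp only [mem_filter, not_lt] at hu
    have : v < u := lt_of_le_of_ne hu.2 (by rintro rfl; exact hvS hu.1)
    exact rkV_anti this
  have hThigh : 2 ^ rkV v ≤ ∑ u ∈ T.filter (fun w => ¬ w < v), 2 ^ rkV u := by
    apply Finset.single_le_sum (f := fun u => 2 ^ rkV u) (fun _ _ => Nat.zero_le _)
    simp [hvT]
  have hlowsum : ∑ u ∈ S.filter (fun w => w < v), 2 ^ rkV u
      = ∑ u ∈ T.filter (fun w => w < v), 2 ^ rkV u := by rw [hlow]
  unfold valV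
  omega

lemma revGT_total {S T : Finset V} (h : S ≠ T) : RevGT S T ∨ RevGT T S := by
  classical
  have hne : ((S \ T) ∪ (T \ S)).Nonempty := by
    rw [Finset.nonempty_iff_ne_empty]
    intro hemp
    apply h
    ext x
    constructor
    · intro hx
      by_contra hxT
      have : x ∈ (S \ T) ∪ (T \ S) := by simp [hx, hxT]
      simp [hemp] at this
    · intro hx
      by_contra hxS
      have : x ∈ (S \ T) ∪ (T \ S) := by simp [hx, hxS]
      simp [hemp] at this
  have hvmem := Finset.min'_mem _ hne
  set v := ((S \ T) ∪ (T \ S)).min' hne with hv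
  have hbelow : ∀ w, w < v → (w ∈ S ↔ w ∈ T) := by
    intro w hw
    by_contra hiff
    have hwmem : w ∈ (S \ T) ∪ (T \ S) := by
      simp only [Finset.mem_union, Finset.mem_sdiff]
      tauto
    exact absurd hw (not_lt.mpr (Finset.min'_le _ _ hwmem))
  rw [Finset.mem_union, Finset.mem_sdiff, Finset.mem_sdiff] at hvmem
  rcases hvmem with ⟨hvS, hvT⟩ | ⟨hvT, hvS⟩
  · exact Or.inr ⟨v, hvS, hvT, fun w hw => (hbelow w hw).symm⟩
  · exact Or.inl ⟨v, hvT, hvS, hbelow⟩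

end AuxVal

-- === auxiliary lemmas ===

section AuxShelling

set_option linter.unusedSectionVars false

lemma revGT_gt {S T : Finset V} {v : V} (hv : v ∈ T) (hvS : v ∉ S)
    (hb : ∀ w, w < v → (w ∈ S ↔ w ∈ T)) :
    (∀ w ∈ T, w ∉ S → v ≤ w) ∧ (∀ w ∈ S, w ∉ T → v < w) := by
  constructor
  · intro w hw hws
    by_contra hlt
    push_neg at hlt
    exact hws ((hb w hlt).mpr hw)
  · intro w hw hwt
    rcases lt_trichotomy w v with h | h | h
    · exact absurd ((hb w h).mp hw) hwt
    · exact absurd (h ▸ hv) hwt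
    · exact h

open Classical in
lemma shelling_step (c : V → ℕ) (a : ℕ → ℕ) (m d : ℕ)
    (hc : ∀ v, 1 ≤ c v ∧ c v ≤ m)
    (τ γ : Finset V) (hτ : IsFacetF c a m d τ) (hγ : γ ⊆ τ) :
    ∀ n (τ' : Finset V), (τ \ τ').card = n → IsFacetF c a m d τ' → RevGT τ' τ → γ ⊆ τ' →
    ∃ v ∈ τ, v ∉ γ ∧ ∃ τ'', IsFacetF c a m d τ'' ∧ RevGT τ'' τ ∧ τ.erase v ⊆ τ'' := by
  intro n
  induction n using Nat.strong_induction_on with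
  | _ n IH =>
  intro τ' hn hτ' hrev hγ'
  obtain ⟨v, hvτ, hvτ', hb⟩ := hrev
  have hgt := revGT_gt hvτ hvτ' hb
  by_cases hone : τ \ τ' ⊆ {v}
  · -- base case: τ.erase v ⊆ τ'
    refine ⟨v, hvτ, fun hvγ => hvτ' (hγ' hvγ), τ', hτ', ⟨v, hvτ, hvτ', hb⟩, ?_⟩
    intro u hu
    rw [Finset.mem_erase] at hu
    by_contra hu'
    have : u ∈ τ \ τ' := Finset.mem_sdiff.mpr ⟨hu.2, hu'⟩
    exact hu.1 (Finset.mem_singleton.mp (hone this))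
  · -- inductive step
    obtain ⟨u, hu, huv⟩ : ∃ u ∈ τ \ τ', u ≠ v := by
      by_contra hcon
      push_neg at hcon
      exact hone (fun x hx => Finset.mem_singleton.mpr (hcon x hx))
    rw [Finset.mem_sdiff] at hu
    have huvlt : v < u := lt_of_le_of_ne (hgt.1 u hu.1 hu.2) (Ne.symm huv)
    have hcardeq : (τ' \ τ).card = (τ \ τ').card := Finset.card_sdiff_comm (hτ'.1.trans hτ.1.symm)
    have hju : c u ∈ Finset.Icc 1 m := Finset.mem_Icc.mpr ⟨(hc u).1, (hc u).2⟩
    -- find w' ∈ τ' \ τ with c w' = c u, or with room in color c u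
    obtain ⟨w', hw', hor⟩ : ∃ w' ∈ τ' \ τ,
        c w' = c u ∨ (τ'.filter (fun x => c x = c u)).card < a (c u) := by
      by_cases hroom : (τ'.filter (fun x => c x = c u)).card < a (c u)
      · have hne : (τ' \ τ).Nonempty := by
          rw [← Finset.card_pos, hcardeq, Finset.card_pos]
          exact ⟨v, Finset.mem_sdiff.mpr ⟨hvτ, hvτ'⟩⟩
        exact ⟨hne.choose, hne.choose_spec, Or.inr hroom⟩
      · -- color class c u is full in τ'; compare with τ
        have hfull : (τ'.filter (fun x => c x = c u)).card = a (c u) :=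
          le_antisymm (hτ'.2 _ hju) (not_lt.mp hroom)
        have hsplit : ∀ σ σ2 : Finset V, (σ.filter (fun x => c x = c u)).card
            = ((σ ∩ σ2).filter (fun x => c x = c u)).card + ((σ \ σ2).filter (fun x => c x = c u)).card := by
          intro σ σ2
          have e1 : (σ ∩ σ2).filter (fun x => c x = c u) = σ.filter (fun x => c x = c u) ∩ σ2 := by
            ext x; simp only [Finset.mem_filter, Finset.mem_inter]; tauto
          have e2 : (σ \ σ2).filter (fun x => c x = c u) = σ.filter (fun x => c x = c u) \ σ2 := by
            ext x; simp only [Finset.mem_filter, Finset.mem_sdiff]; tauto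
          rw [e1, e2, Finset.card_inter_add_card_sdiff]
        have h1 := hsplit τ τ'
        have h2 := hsplit τ' τ
        rw [Finset.inter_comm τ' τ] at h2
        have hA : u ∈ (τ \ τ').filter (fun x => c x = c u) := by
          simp [Finset.mem_sdiff.mpr hu]
        have hAcard : 1 ≤ ((τ \ τ').filter (fun x => c x = c u)).card :=
          Finset.card_pos.mpr ⟨u, hA⟩
        have htle : (τ.filter (fun x => c x = c u)).card ≤ a (c u) := hτ.2 _ hju
        have hBpos : 0 < ((τ' \ τ).filter (fun x => c x = c u)).card := by omega
        obtain ⟨w', hw'⟩ := Finset.card_pos.mp hBpos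
        rw [Finset.mem_filter] at hw'
        exact ⟨w', hw'.1, Or.inl hw'.2⟩
    rw [Finset.mem_sdiff] at hw'
    have hw'v : v < w' := hgt.2 w' hw'.1 hw'.2
    -- the new facet
    set τ'' := insert u (τ'.erase w') with hτ''def
    have huτ'e : u ∉ τ'.erase w' := fun h => hu.2 (Finset.mem_of_mem_erase h)
    have hdpos : 1 ≤ d := by
      rw [← hτ'.1]; exact Finset.card_pos.mpr ⟨w', hw'.1⟩
    have hcard'' : τ''.card = d := by
      rw [hτ''def, Finset.card_insert_of_notMem huτ'e, Finset.card_erase_of_mem hw'.1, hτ'.1]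
      omega
    have hfacet'' : IsFacetF c a m d τ'' := by
      refine ⟨hcard'', fun j hj => ?_⟩
      have hbase : (τ'.filter (fun x => c x = j)).card ≤ a j := hτ'.2 j hj
      rw [hτ''def, Finset.filter_insert]
      by_cases hcu : c u = j
      · rw [if_pos hcu, Finset.filter_erase]
        rcases hor with hcw | hroom
        · have hwmem : w' ∈ τ'.filter (fun x => c x = j) := by
            rw [Finset.mem_filter]; exact ⟨hw'.1, by rw [hcw, hcu]⟩
          rw [Finset.card_insert_of_notMem (by simp [Finset.mem_erase, Finset.mem_filter]; intro _ h; exact absurd h hu.2)]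
          rw [Finset.card_erase_of_mem hwmem]
          have : 1 ≤ (τ'.filter (fun x => c x = j)).card := Finset.card_pos.mpr ⟨w', hwmem⟩
          omega
        · calc (insert u ((τ'.filter (fun x => c x = j)).erase w')).card
              ≤ ((τ'.filter (fun x => c x = j)).erase w').card + 1 := Finset.card_insert_le _ _
            _ ≤ (τ'.filter (fun x => c x = j)).card + 1 := by
                have := Finset.card_erase_le (s := τ'.filter (fun x => c x = j)) (a := w')
                omega
            _ ≤ a j := by rw [← hcu]; omega
      · rw [if_neg hcu, Finset.filter_erase]
        calc ((τ'.filter (fun x => c x = j)).erase w').card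
            ≤ (τ'.filter (fun x => c x = j)).card := Finset.card_erase_le
          _ ≤ a j := hbase
    have hrev'' : RevGT τ'' τ := by
      refine ⟨v, hvτ, ?_, ?_⟩
      · rw [hτ''def, Finset.mem_insert]
        rintro (rfl | hmem)
        · exact absurd rfl huvlt.ne
        · exact hvτ' (Finset.mem_of_mem_erase hmem)
      · intro w hwv
        rw [hτ''def, Finset.mem_insert, Finset.mem_erase]
        constructor
        · rintro (rfl | ⟨_, hmem⟩)
          · exact absurd hwv (not_lt.mpr huvlt.le)
          · exact (hb w hwv).mp hmem
        · intro hw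
          exact Or.inr ⟨fun h => absurd hwv (h ▸ not_lt.mpr hw'v.le), (hb w hwv).mpr hw⟩
    have hγ'' : γ ⊆ τ'' := by
      intro x hx
      rw [hτ''def, Finset.mem_insert, Finset.mem_erase]
      exact Or.inr ⟨fun h => hw'.2 (h ▸ hγ hx), hγ' hx⟩
    have hmeas : τ \ τ'' = (τ \ τ').erase u := by
      ext x
      simp only [hτ''def, Finset.mem_sdiff, Finset.mem_erase, Finset.mem_insert, not_or,
        Finset.mem_erase, not_and, not_not]
      constructor
      · rintro ⟨hxτ, hxu, hxe⟩
        refine ⟨hxu, hxτ, fun hxτ' => ?_⟩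
        have hxw' : x ≠ w' := fun h => hw'.2 (h ▸ hxτ)
        exact absurd (hxe hxw') (by simp [hxτ'])
      · rintro ⟨hxu, hxτ, hxτ'⟩
        refine ⟨hxτ, hxu, fun hxw' h => hxτ' h⟩
    have hmeaslt : (τ \ τ'').card < n := by
      rw [hmeas, Finset.card_erase_of_mem (Finset.mem_sdiff.mpr hu), hn]
      have : 1 ≤ n := by rw [← hn]; exact Finset.card_pos.mpr ⟨u, Finset.mem_sdiff.mpr hu⟩
      omega
    exact IH _ hmeaslt τ'' rfl hfacet'' hrev'' hγ''

end AuxShelling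

open Classical Polynomial in
/-- Corollary `4 → 2`: if `M ⊆ S_d(X,(∞,a))` is a `(0)`-compressed multicomplex and `Γ` is
the complex generated by the facets `Φ⁻¹(M)` of `Λ_d`, then the revlex order on the facets
of `Γ` is a shelling whose restriction function is the restriction of that of `Λ_d`, and
`h(Γ) = F(M)` (encoded by the defining polynomial identity for the h-vector). -/
theorem stmt15 (c : V → ℕ) (cx : W → ℕ) (a : ℕ → ℕ) (m d : ℕ)
    (hm : 1 ≤ m) (hd1 : 1 ≤ d) (hd2 : d ≤ ∑ i ∈ Finset.Icc 1 m, a i)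
    (hc : ∀ v, 1 ≤ c v ∧ c v ≤ m) (horderV : ∀ v w : V, c v < c w → w < v)
    (ha : ∀ i ∈ Finset.Icc 1 m, 0 < a i ∧ a i ≤ (Finset.univ.filter (fun v : V => c v = i)).card)
    (hcx : ∀ x : W, cx x ≤ m) (horderW : ∀ x y : W, cx x < cx y → y < x)
    (Φ : Finset V → (W →₀ ℕ))
    -- `Φ` is a bijection from the facets of `Λ_d` onto `S_d(X,(∞,a))`
    (hΦS : ∀ τ, IsFacetF c a m d τ → InS cx a m d (Φ τ))
    (hΦinj : ∀ τ τ', IsFacetF c a m d τ → IsFacetF c a m d τ' → Φ τ = Φ τ' → τ = τ')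
    (hΦsurj : ∀ μ : W →₀ ℕ, InS cx a m d μ → ∃ τ, IsFacetF c a m d τ ∧ Φ τ = μ)
    -- `deg Φ(τ) = |R(τ)|`
    (hΦdeg : ∀ τ, IsFacetF c a m d τ → degM (Φ τ) = (Rres c a m d τ).card)
    -- the swap property of Theorem `bijection`
    (hΦswap : ∀ τ, IsFacetF c a m d τ → ∀ γ ⊆ τ, ¬ Rres c a m d τ ⊆ γ →
      ∃ (τ' : Finset V) (i : ℕ) (μ'' : W →₀ ℕ), 1 ≤ i ∧ i ≤ m ∧
        IsFacetF c a m d τ' ∧ γ ⊆ τ' ∧ RevGT τ' τ ∧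
        (∀ x, μ'' x ≤ Φ τ x) ∧ degM (Φ τ') = degM μ'' ∧
        (∀ x, cx x ≠ 0 → cx x ≠ i → Φ τ' x = μ'' x) ∧
        (Φ τ' = μ'' ∨ MonRevGTOn (fun x => cx x = 0 ∨ cx x = i) (Φ τ') μ''))
    (M : Finset (W →₀ ℕ)) (hMS : ∀ μ ∈ M, InS cx a m d μ) (hMdc : DivClosed M)
    (hMcomp : ∀ i, 1 ≤ i → i ≤ m → Compressed0i cx a m d i M) :
    -- revlex is a shelling of `Γ` with restriction function `Rres`
    (∀ τ, IsFacetF c a m d τ → Φ τ ∈ M → ∀ γ ⊆ τ,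
      (Rres c a m d τ ⊆ γ ↔
        ∀ τ', IsFacetF c a m d τ' → Φ τ' ∈ M → RevGT τ' τ → ¬ γ ⊆ τ')) ∧
    -- `h(Γ) = F(M)`
    (∑ i ∈ Finset.range (d + 1),
        (C ((((Finset.univ : Finset (Finset V)).filter
            (fun σ => ∃ τ, IsFacetF c a m d τ ∧ Φ τ ∈ M ∧ σ ⊆ τ)).filter
              (fun σ => σ.card = i)).card : ℤ)) * (X - 1) ^ (d - i)
      = ∑ i ∈ Finset.range (d + 1),
        (C (((M.filter (fun μ => degM μ = i)).card : ℤ))) * X ^ (d - i)) := by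
    classical
  have hpart1 : ∀ τ, IsFacetF c a m d τ → Φ τ ∈ M → ∀ γ, γ ⊆ τ →
      (Rres c a m d τ ⊆ γ ↔
        ∀ τ', IsFacetF c a m d τ' → Φ τ' ∈ M → RevGT τ' τ → ¬ γ ⊆ τ') := by
    intro τ hτ hτM γ hγ
    constructor
    · intro hRsub τ' hτ' hτ'M hrev hγ'
      obtain ⟨v, hvτ, hvγ, τ'', hτ'', hrev'', hsub⟩ :=
        shelling_step c a m d hc τ γ hτ hγ _ τ' rfl hτ' hrev hγ'
      have hvR : v ∈ Rres c a m d τ := by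
        simp only [Rres, Finset.mem_filter]
        exact ⟨hvτ, τ'', hτ'', hrev'', hsub⟩
      exact hvγ (hRsub hvR)
    · intro hall
      by_contra hRsub
      obtain ⟨τ', i, μ'', hi1, him, hτ', hγτ', hrev, hdvd, hdeg, hagree, hor⟩ :=
        hΦswap τ hτ γ hγ hRsub
      have hμ'' : μ'' ∈ M := hMdc _ hτM μ'' hdvd
      have hτ'M : Φ τ' ∈ M := by
        rcases hor with heq | hgt
        · rw [heq]; exact hμ''
        · exact hMcomp i hi1 him μ'' hμ'' (Φ τ') (hΦS τ' hτ') hdeg hagree hgt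
      exact hall τ' hτ' hτ'M hrev hγτ'
  refine ⟨hpart1, ?_⟩
  set Fac : Finset (Finset V) :=
    Finset.univ.filter (fun τ => IsFacetF c a m d τ ∧ Φ τ ∈ M) with hFacdef
  set Faces : Finset (Finset V) :=
    Finset.univ.filter (fun σ => ∃ τ, IsFacetF c a m d τ ∧ Φ τ ∈ M ∧ σ ⊆ τ) with hFacesdef
  have hmemFac : ∀ τ, τ ∈ Fac ↔ IsFacetF c a m d τ ∧ Φ τ ∈ M := by
    intro τ; rw [hFacdef, Finset.mem_filter]; simp
  have hmemFaces : ∀ σ, σ ∈ Faces ↔ ∃ τ, IsFacetF c a m d τ ∧ Φ τ ∈ M ∧ σ ⊆ τ := by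
    intro σ; rw [hFacesdef, Finset.mem_filter]; simp
  -- choose, for each face, the earliest (minimal valV) facet of Γ containing it
  have hgex : ∀ σ : Finset V, ∃ T : Finset V, σ ∈ Faces →
      (T ∈ Fac ∧ σ ⊆ T ∧ ∀ τ' ∈ Fac, σ ⊆ τ' → valV T ≤ valV τ') := by
    intro σ
    by_cases h : σ ∈ Faces
    · have hne : (Fac.filter (fun τ => σ ⊆ τ)).Nonempty := by
        obtain ⟨τ, hτ, hτM, hστ⟩ := (hmemFaces σ).mp h
        exact ⟨τ, Finset.mem_filter.mpr ⟨(hmemFac τ).mpr ⟨hτ, hτM⟩, hστ⟩⟩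
      obtain ⟨T, hT, hmin⟩ := Finset.exists_min_image _ valV hne
      rw [Finset.mem_filter] at hT
      exact ⟨T, fun _ => ⟨hT.1, hT.2, fun τ' hτ' hστ' =>
        hmin τ' (Finset.mem_filter.mpr ⟨hτ', hστ'⟩)⟩⟩
    · exact ⟨∅, fun h' => absurd h' h⟩
  choose g hg using hgex
  -- fibers of g are the shelling intervals
  have hfib : ∀ τ, τ ∈ Fac → ∀ σ : Finset V,
      ((σ ∈ Faces ∧ g σ = τ) ↔ (Rres c a m d τ ⊆ σ ∧ σ ⊆ τ)) := by
    intro τ hτFac σ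
    obtain ⟨hτfacet, hτM⟩ := (hmemFac τ).mp hτFac
    have hRofmin : ∀ σ' : Finset V, σ' ∈ Faces → Rres c a m d (g σ') ⊆ σ' := by
      intro σ' hσ'
      obtain ⟨hgFac, hσg, hmin⟩ := hg σ' hσ'
      obtain ⟨hgfacet, hgM⟩ := (hmemFac _).mp hgFac
      apply (hpart1 _ hgfacet hgM σ' hσg).mpr
      intro τ' hτ' hτ'M hrev hστ'
      have hlt : valV τ' < valV (g σ') := valV_lt_of_revGT hrev
      have hle : valV (g σ') ≤ valV τ' :=
        hmin τ' ((hmemFac τ').mpr ⟨hτ', hτ'M⟩) hστ'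
      omega
    constructor
    · rintro ⟨hσF, rfl⟩
      exact ⟨hRofmin σ hσF, (hg σ hσF).2.1⟩
    · rintro ⟨hRσ, hστ⟩
      have hσF : σ ∈ Faces := (hmemFaces σ).mpr ⟨τ, hτfacet, hτM, hστ⟩
      refine ⟨hσF, ?_⟩
      obtain ⟨hgFac, hσg, hmin⟩ := hg σ hσF
      obtain ⟨hgfacet, hgM⟩ := (hmemFac _).mp hgFac
      by_contra hne
      rcases revGT_total hne with hrev | hrev
      · -- RevGT (g σ) τ
        exact (hpart1 τ hτfacet hτM σ hστ).mp hRσ (g σ) hgfacet hgM hrev hσg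
      · -- RevGT τ (g σ)
        exact (hpart1 (g σ) hgfacet hgM σ hσg).mp (hRofmin σ hσF) τ hτfacet hτM hrev hστ
  -- Step A : LHS = sum over faces
  have hA : (∑ i ∈ Finset.range (d + 1),
        (C (((Faces.filter (fun σ => σ.card = i)).card : ℤ))) * (X - 1) ^ (d - i))
      = ∑ σ ∈ Faces, ((X : ℤ[X]) - 1) ^ (d - σ.card) := by
    rw [← Finset.sum_fiberwise_of_maps_to (g := Finset.card) (t := Finset.range (d + 1))
      (fun σ hσ => by
        obtain ⟨τ, hτ, _, hστ⟩ := (hmemFaces σ).mp hσ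
        have h1 := Finset.card_le_card hστ
        have h2 := hτ.1
        exact Finset.mem_range.mpr (by omega))
      (fun σ => ((X : ℤ[X]) - 1) ^ (d - σ.card))]
    apply Finset.sum_congr rfl
    intro i _
    rw [map_natCast, ← nsmul_eq_mul, ← Finset.sum_const]
    exact Finset.sum_congr rfl (fun σ hσ => by rw [(Finset.mem_filter.mp hσ).2])
  -- Step B : RHS = sum over M
  have hB : (∑ i ∈ Finset.range (d + 1),
        (C (((M.filter (fun μ => degM μ = i)).card : ℤ))) * X ^ (d - i))
      = ∑ μ ∈ M, (X : ℤ[X]) ^ (d - degM μ) := by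
    rw [← Finset.sum_fiberwise_of_maps_to (g := degM) (t := Finset.range (d + 1))
      (fun μ hμ => Finset.mem_range.mpr (by have := (hMS μ hμ).1; omega))
      (fun μ => (X : ℤ[X]) ^ (d - degM μ))]
    apply Finset.sum_congr rfl
    intro i _
    rw [map_natCast, ← nsmul_eq_mul, ← Finset.sum_const]
    exact Finset.sum_congr rfl (fun μ hμ => by rw [(Finset.mem_filter.mp hμ).2])
  -- Step C : sum over faces = sum over facets of X^(d - |R|)
  have hC : (∑ σ ∈ Faces, ((X : ℤ[X]) - 1) ^ (d - σ.card))
      = ∑ τ ∈ Fac, (X : ℤ[X]) ^ (d - (Rres c a m d τ).card) := by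
    rw [← Finset.sum_fiberwise_of_maps_to (g := g) (t := Fac)
      (fun σ hσ => (hg σ hσ).1) (fun σ => ((X : ℤ[X]) - 1) ^ (d - σ.card))]
    apply Finset.sum_congr rfl
    intro τ hτFac
    have hτfacet := ((hmemFac τ).mp hτFac).1
    have hfibeq : Faces.filter (fun σ => g σ = τ)
        = (τ.powerset).filter (fun σ => Rres c a m d τ ⊆ σ) := by
      ext σ
      constructor
      · intro h
        rw [Finset.mem_filter] at h
        have := (hfib τ hτFac σ).mp h
        rw [Finset.mem_filter, Finset.mem_powerset]
        exact ⟨this.2, this.1⟩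
      · intro h
        rw [Finset.mem_filter, Finset.mem_powerset] at h
        have := (hfib τ hτFac σ).mpr ⟨h.2, h.1⟩
        rw [Finset.mem_filter]
        exact this
    rw [hfibeq]
    -- now the interval sum
    have hRτ : Rres c a m d τ ⊆ τ := Finset.filter_subset _ _
    set Rt := Rres c a m d τ with hRt
    set t := τ \ Rt with ht
    have htcard : t.card = d - Rt.card := by
      rw [ht, Finset.card_sdiff_of_subset hRτ, hτfacet.1]
    have hstep : ∑ σ ∈ (τ.powerset).filter (fun σ => Rt ⊆ σ), ((X : ℤ[X]) - 1) ^ (d - σ.card)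
        = ∑ A ∈ t.powerset, ((X : ℤ[X]) - 1) ^ ((t \ A).card) := by
      apply Finset.sum_nbij' (i := fun σ => σ \ Rt) (j := fun A => Rt ∪ A)
      · intro σ hσ
        rw [Finset.mem_filter, Finset.mem_powerset] at hσ
        rw [Finset.mem_powerset, ht]
        exact Finset.sdiff_subset_sdiff hσ.1 (le_refl _)
      · intro A hA
        rw [Finset.mem_powerset] at hA
        rw [Finset.mem_filter, Finset.mem_powerset]
        refine ⟨Finset.union_subset hRτ (hA.trans (by rw [ht]; exact Finset.sdiff_subset)), Finset.subset_union_left⟩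
      · intro σ hσ
        rw [Finset.mem_filter, Finset.mem_powerset] at hσ
        exact Finset.union_sdiff_of_subset hσ.2
      · intro A hA
        rw [Finset.mem_powerset] at hA
        apply Finset.union_sdiff_cancel_left
        have : Disjoint Rt t := by rw [ht]; exact Finset.disjoint_sdiff
        exact this.mono_right hA
      · intro σ hσ
        rw [Finset.mem_filter, Finset.mem_powerset] at hσ
        congr 1
        have h1 : (σ \ Rt).card = σ.card - Rt.card := Finset.card_sdiff_of_subset hσ.2
        have h2 : σ \ Rt ⊆ t := by rw [ht]; exact Finset.sdiff_subset_sdiff hσ.1 (le_refl _)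
        have h3 : (t \ (σ \ Rt)).card = t.card - (σ \ Rt).card := Finset.card_sdiff_of_subset h2
        have h4 : Rt.card ≤ σ.card := Finset.card_le_card hσ.2
        have h5 : σ.card ≤ d := by rw [← hτfacet.1]; exact Finset.card_le_card hσ.1
        have h6 : Rt.card ≤ d := by rw [← hτfacet.1]; exact Finset.card_le_card hRτ
        omega
    rw [hstep]
    have hp := Finset.prod_add (fun _ : V => (1 : ℤ[X])) (fun _ => (X : ℤ[X]) - 1) t
    simp only [Finset.prod_const, one_pow, one_mul] at hp
    have hX : (1 + ((X : ℤ[X]) - 1)) = X := by ring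
    rw [hX] at hp
    rw [← hp, htcard]
  -- Step D : sum over facets = sum over M
  have hD : (∑ τ ∈ Fac, (X : ℤ[X]) ^ (d - (Rres c a m d τ).card))
      = ∑ μ ∈ M, (X : ℤ[X]) ^ (d - degM μ) := by
    apply Finset.sum_bij (i := fun τ _ => Φ τ)
    · intro τ hτ
      exact ((hmemFac τ).mp hτ).2
    · intro τ1 h1 τ2 h2 heq
      exact hΦinj τ1 τ2 ((hmemFac τ1).mp h1).1 ((hmemFac τ2).mp h2).1 heq
    · intro μ hμ
      obtain ⟨τ, hτ, hΦτ⟩ := hΦsurj μ (hMS μ hμ)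
      exact ⟨τ, (hmemFac τ).mpr ⟨hτ, hΦτ ▸ hμ⟩, hΦτ⟩
    · intro τ hτ
      rw [hΦdeg τ ((hmemFac τ).mp hτ).1]
  rw [hA, hB, hC, hD]
end

section
/- If Δ is a pure (d−1)-dimensional simplicial complex all of whose facets are facets of Λ_d, and the h-vector of Λ_d equals the F-vector of a sub-multicomplex of S_d(X,(∞,a)), then the number of facets of Δ is at most |S_d(X,(∞,a))|; in particular, since Φ: fac(Λ_d) → S_d(X,(∞,a)) and Ψ: S_d(X,(∞,a)) → fac(Λ_d) satisfy Φ∘Ψ = id, both Φ and Ψ are bijections. -/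
open Finset

variable {V : Type*} [Fintype V] [LinearOrder V]
variable {W : Type*} [Fintype W] [LinearOrder W]

/-- Faces of `Λ_d`. -/
def IsFaceF (c : V → ℕ) (a : ℕ → ℕ) (m d : ℕ) (σ : Finset V) : Prop :=
  σ.card ≤ d ∧ ∀ i ∈ Finset.Icc 1 m, (σ.filter (fun v => c v = i)).card ≤ a i

def FVec (M : Finset (W →₀ ℕ)) (j : ℕ) : ℕ := (M.filter (fun μ => degM μ = j)).card

open Classical Polynomial in
/-- The counting argument of Lemma `inverse`: since the h-vector of `Λ_d` is the F-vector
of a sub-multicomplex of `S = S_d(X,(∞,a))`, any pure `(d-1)`-complex `Δ` whose facets are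
facets of `Λ_d` has at most `|S|` facets; in particular, given maps
`Φ : fac(Λ_d) → S` and `Ψ : S → fac(Λ_d)` with `Φ ∘ Ψ = id`, both are bijections. -/
theorem stmt19 (c : V → ℕ) (cx : W → ℕ) (a n : ℕ → ℕ) (m d : ℕ)
    (hm : 1 ≤ m) (hd1 : 1 ≤ d) (hd2 : d ≤ ∑ i ∈ Finset.Icc 1 m, a i)
    (hc : ∀ v, 1 ≤ c v ∧ c v ≤ m)
    (hsizeV : ∀ i ∈ Finset.Icc 1 m, (Finset.univ.filter (fun v : V => c v = i)).card = n i)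
    (horderV : ∀ v w : V, c v < c w → w < v)
    (ha : ∀ i ∈ Finset.Icc 1 m, 0 < a i ∧ a i ≤ n i)
    (hcx : ∀ x : W, cx x ≤ m) (horderW : ∀ x y : W, cx x < cx y → y < x)
    (hX0 : (Finset.univ.filter (fun x : W => cx x = 0)).card = (∑ i ∈ Finset.Icc 1 m, a i) - d)
    (hXi : ∀ i ∈ Finset.Icc 1 m, (Finset.univ.filter (fun x : W => cx x = i)).card = n i - a i)
    -- `S` as a finite set of monomials
    (Sfin : Finset (W →₀ ℕ)) (hSfin : ∀ μ, μ ∈ Sfin ↔ InS cx a m d μ)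
    -- the complex `Λ_d` as a finite set of faces
    (LamF : Finset (Finset V)) (hLamF : ∀ σ, σ ∈ LamF ↔ IsFaceF c a m d σ)
    -- `Δ`: a pure `(d-1)`-dimensional complex whose facets are facets of `Λ_d`
    (Δ : Finset (Finset V))
    (hΔdc : ∀ σ ∈ Δ, ∀ ρ ⊆ σ, ρ ∈ Δ)
    (hΔpure : ∀ σ ∈ Δ, ∃ τ ∈ Δ, τ.card = d ∧ σ ⊆ τ)
    (hΔfac : ∀ τ ∈ Δ, τ.card = d → IsFacetF c a m d τ)
    -- the h-vector of `Λ_d`…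
    (h : ℕ → ℕ)
    (hpoly : ∑ i ∈ Finset.range (d + 1),
        (C (((LamF.filter (fun σ => σ.card = i)).card : ℤ))) * (X - 1) ^ (d - i)
      = ∑ i ∈ Finset.range (d + 1), (C ((h i : ℤ))) * X ^ (d - i))
    -- …is the F-vector of a sub-multicomplex `M ⊆ S`
    (M : Finset (W →₀ ℕ)) (hMsub : M ⊆ Sfin) (hMdc : DivClosed M)
    (hFM : ∀ i, i ≤ d → FVec M i = h i) :
    (Δ.filter (fun τ => τ.card = d)).card ≤ Sfin.card ∧
    (∀ (Φ : {τ : Finset V // IsFacetF c a m d τ} → {μ : W →₀ ℕ // μ ∈ Sfin})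
        (Ψ : {μ : W →₀ ℕ // μ ∈ Sfin} → {τ : Finset V // IsFacetF c a m d τ}),
      (∀ μ, Φ (Ψ μ) = μ) → Function.Bijective Φ ∧ Function.Bijective Ψ) := by
  -- Step 1: f_{d-1}(Λ_d) = ∑ h_i, by evaluating the polynomial identity at X = 1
  have keyN : ((LamF.filter (fun σ => σ.card = d)).card : ℤ)
      = ∑ i ∈ Finset.range (d + 1), (h i : ℤ) := by
    have := congrArg (Polynomial.eval (1 : ℤ)) hpoly
    simp only [Polynomial.eval_finset_sum, Polynomial.eval_mul, Polynomial.eval_pow,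
      Polynomial.eval_sub, Polynomial.eval_one, Polynomial.eval_C, Polynomial.eval_X,
      sub_self, one_pow, mul_one] at this
    rw [Finset.sum_eq_single_of_mem d (Finset.mem_range.2 (Nat.lt_succ_self d))] at this
    · simpa using this
    · intro i hi hne
      have : 0 < d - i := Nat.sub_pos_of_lt (lt_of_le_of_ne
        (Nat.lt_succ_iff.1 (Finset.mem_range.1 hi)) hne)
      rw [zero_pow (Nat.pos_iff_ne_zero.1 this), mul_zero]
  -- Step 2: |M| = ∑ FVec M i = ∑ h i
  have keyM : M.card = ∑ i ∈ Finset.range (d + 1), h i := by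
    rw [Finset.card_eq_sum_card_fiberwise (f := degM) (t := Finset.range (d + 1))
      (fun μ hμ => Finset.mem_range.2 (Nat.lt_succ_of_le ((hSfin μ).1 (hMsub hμ)).1))]
    exact Finset.sum_congr rfl fun i hi => hFM i (Nat.lt_succ_iff.1 (Finset.mem_range.1 hi))
  have keyEq : (LamF.filter (fun σ => σ.card = d)).card = M.card := by
    have : ((LamF.filter (fun σ => σ.card = d)).card : ℤ) = (M.card : ℤ) := by
      rw [keyN, keyM]; push_cast; ring
    exact_mod_cast this
  have keyLe : (LamF.filter (fun σ => σ.card = d)).card ≤ Sfin.card :=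
    keyEq ▸ Finset.card_le_card hMsub
  constructor
  · refine le_trans (Finset.card_le_card ?_) keyLe
    intro τ hτ
    simp only [Finset.mem_filter] at hτ ⊢
    obtain ⟨hτΔ, hτd⟩ := hτ
    obtain ⟨hcard, hbound⟩ := hΔfac τ hτΔ hτd
    exact ⟨(hLamF τ).2 ⟨hcard.le, hbound⟩, hτd⟩
  · intro Φ Ψ hΦΨ
    have hcardfac : Fintype.card {τ : Finset V // IsFacetF c a m d τ}
        = (LamF.filter (fun σ => σ.card = d)).card := by
      rw [Fintype.card_subtype]
      congr 1
      ext τ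
      rw [Finset.mem_filter_univ]
      simp only [Finset.mem_filter, Finset.mem_univ, true_and, hLamF, IsFaceF, IsFacetF]
      constructor
      · rintro ⟨hcard, hb⟩; exact ⟨⟨hcard.le, hb⟩, hcard⟩
      · rintro ⟨⟨_, hb⟩, hcard⟩; exact ⟨hcard, hb⟩
    have hcardS : Fintype.card {μ : W →₀ ℕ // μ ∈ Sfin} = Sfin.card :=
      Fintype.card_coe Sfin
    have hΦsurj : Function.Surjective Φ := fun μ => ⟨Ψ μ, hΦΨ μ⟩
    have hΨinj : Function.Injective Ψ := fun μ ν hμν => by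
      rw [← hΦΨ μ, ← hΦΨ ν, hμν]
    have hge : Fintype.card {μ : W →₀ ℕ // μ ∈ Sfin}
        ≤ Fintype.card {τ : Finset V // IsFacetF c a m d τ} :=
      Fintype.card_le_of_surjective Φ hΦsurj
    have hle : Fintype.card {τ : Finset V // IsFacetF c a m d τ}
        ≤ Fintype.card {μ : W →₀ ℕ // μ ∈ Sfin} := by
      rw [hcardfac, hcardS]; exact keyLe
    have hcard : Fintype.card {τ : Finset V // IsFacetF c a m d τ}
        = Fintype.card {μ : W →₀ ℕ // μ ∈ Sfin} := le_antisymm hle hge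
    exact ⟨(Fintype.bijective_iff_surjective_and_card Φ).2 ⟨hΦsurj, hcard⟩,
      (Fintype.bijective_iff_injective_and_card Ψ).2 ⟨hΨinj, hcard.symm⟩⟩
end
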